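/- arXiv:1606.08876 — 3 statements merged into one kernel-verified Lean document; each statement's English description precedes it below -/
import Mathlib

section
/- For every convex body K in R^n (n ≥ 2) and every λ ∈ [0,1], the volume of K - λK satisfies Vol_n(K - λK) ≤ (1+λ)^n · Vol_n(K - K) / 2^n. -/
open MeasureTheory Set Pointwise
open scoped ENNReal NNReal

lemma img_add_left_vol (a : ℝ) (T : Set ℝ) : volume ((a + ·) '' T) = volume T := by
  have : (a + ·) '' T = (-a + ·) ⁻¹' T := by
    ext x
    constructor
    · rintro ⟨t, ht, rfl⟩; simpa using ht
    · intro h; exact ⟨-a + x, h, by ring⟩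
  rw [this, measure_preimage_add]

lemma sumset_compact (S T : Set ℝ) (hS : IsCompact S) (hT : IsCompact T)
    (hSne : S.Nonempty) (hTne : T.Nonempty) :
    volume S + volume T ≤ volume (S + T) := by
  set a := sSup S with ha
  set b := sInf T with hb
  have haS : a ∈ S := hS.sSup_mem hSne
  have hbT : b ∈ T := hT.sInf_mem hTne
  set X : Set ℝ := (a + ·) '' T with hX
  set Y : Set ℝ := (b + ·) '' S with hY
  have hXsub : X ⊆ S + T := by
    rintro _ ⟨t, ht, rfl⟩; exact add_mem_add haS ht
  have hYsub : Y ⊆ S + T := by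
    rintro _ ⟨s, hs, rfl⟩; exact ⟨s, hs, b, hbT, by dsimp; ring⟩
  have hXY : X ∩ Y ⊆ {a + b} := by
    rintro x ⟨⟨t, ht, rfl⟩, ⟨s, hs, hst⟩⟩
    have h1 : s ≤ a := le_csSup hS.bddAbove hs
    have h2 : b ≤ t := csInf_le hT.bddBelow ht
    have hst' : b + s = a + t := hst
    have : t = b := by linarith
    simp [this]
  have hYm : MeasurableSet Y := ((Homeomorph.addLeft b).isCompact_image.2 hS).measurableSet
  have key : volume X + volume Y = volume (X ∪ Y) + volume (X ∩ Y) :=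
    (measure_union_add_inter X hYm).symm
  have hIz : volume (X ∩ Y) = 0 :=
    le_antisymm (le_trans (measure_mono hXY) (by simp)) zero_le
  calc volume S + volume T = volume Y + volume X := by
        rw [hX, hY, img_add_left_vol, img_add_left_vol]
      _ = volume (X ∪ Y) + volume (X ∩ Y) := by rw [add_comm, key]
      _ = volume (X ∪ Y) := by rw [hIz, add_zero]
      _ ≤ volume (S + T) := measure_mono (union_subset hXsub hYsub)

lemma sumset_meas (S T U : Set ℝ) (hS : MeasurableSet S) (hT : MeasurableSet T)
    (hSne : S.Nonempty) (hTne : T.Nonempty) (hsub : S + T ⊆ U) :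
    volume S + volume T ≤ volume U := by
  obtain ⟨s₀, hs₀⟩ := hSne
  obtain ⟨t₀, ht₀⟩ := hTne
  by_cases hSi : volume S = ⊤
  · have hsub' : (t₀ + ·) '' S ⊆ U := by
      rintro _ ⟨s, hs, rfl⟩; exact hsub ⟨s, hs, t₀, ht₀, by dsimp; ring⟩
    have : volume U = ⊤ := by
      refine top_le_iff.1 ?_
      rw [← hSi, ← img_add_left_vol t₀ S]
      exact measure_mono hsub'
    simp [this]
  by_cases hTi : volume T = ⊤
  · have hsub' : (s₀ + ·) '' T ⊆ U := by
      rintro _ ⟨t, ht, rfl⟩; exact hsub (add_mem_add hs₀ ht)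
    have : volume U = ⊤ := by
      refine top_le_iff.1 ?_
      rw [← hTi, ← img_add_left_vol s₀ T]
      exact measure_mono hsub'
    simp [this]
  · refine ENNReal.le_of_forall_pos_le_add fun ε hε hU => ?_
    obtain ⟨K₁, hK₁S, hK₁c, hK₁v⟩ := hS.exists_isCompact_lt_add hSi
      (ε := (ε:ENNReal)/2) (by simp [hε.ne'])
    obtain ⟨K₂, hK₂S, hK₂c, hK₂v⟩ := hT.exists_isCompact_lt_add hTi
      (ε := (ε:ENNReal)/2) (by simp [hε.ne'])
    have h1 : volume S + volume T ≤ (volume (K₁ ∪ {s₀}) + volume (K₂ ∪ {t₀})) + ε := by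
      have e1 : volume S ≤ volume (K₁ ∪ {s₀}) + ε/2 :=
        le_trans hK₁v.le (add_le_add_left (measure_mono subset_union_left) _)
      have e2 : volume T ≤ volume (K₂ ∪ {t₀}) + ε/2 :=
        le_trans hK₂v.le (add_le_add_left (measure_mono subset_union_left) _)
      calc volume S + volume T ≤ (volume (K₁ ∪ {s₀}) + ε/2) + (volume (K₂ ∪ {t₀}) + ε/2) :=
            add_le_add e1 e2
        _ = (volume (K₁ ∪ {s₀}) + volume (K₂ ∪ {t₀})) + (ε/2 + ε/2) := by ring
        _ = _ := by rw [ENNReal.add_halves]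
    refine h1.trans ?_
    gcongr
    have := sumset_compact (K₁ ∪ {s₀}) (K₂ ∪ {t₀}) (hK₁c.union isCompact_singleton)
      (hK₂c.union isCompact_singleton) ⟨s₀, by simp⟩ ⟨t₀, by simp⟩
    refine this.trans (measure_mono ?_)
    refine (Set.add_subset_add (union_subset hK₁S (by simpa using hs₀))
      (union_subset hK₂S (by simpa using ht₀))).trans hsub

lemma enn_amgm (x y : ℝ≥0∞) : x * y ≤ (2⁻¹ * (x + y))^2 := by
  rcases eq_or_ne x ⊤ with rfl | hx
  · have : 2⁻¹ * ((⊤ : ℝ≥0∞) + y) = ⊤ := by simp [ENNReal.mul_eq_top]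
    rw [this]; simp [pow_two, ENNReal.mul_eq_top]
  rcases eq_or_ne y ⊤ with rfl | hy
  · have : 2⁻¹ * (x + (⊤ : ℝ≥0∞)) = ⊤ := by simp [ENNReal.mul_eq_top]
    rw [this]; simp [pow_two, ENNReal.mul_eq_top]
  · lift x to NNReal using hx
    lift y to NNReal using hy
    rw [← ENNReal.coe_add, ← ENNReal.coe_mul, show ((2:ℝ≥0∞))⁻¹ = ((2⁻¹ : NNReal) : ℝ≥0∞) by simp,
      ← ENNReal.coe_mul, ← ENNReal.coe_pow, ENNReal.coe_le_coe]
    have : (x:ℝ) * y ≤ (2⁻¹ * ((x:ℝ) + y))^2 := by nlinarith [sq_nonneg ((x:ℝ) - y)]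
    have h2 : ((x * y : NNReal) : ℝ) ≤ (((2⁻¹ * (x + y))^2 : NNReal) : ℝ) := by
      push_cast; exact this
    exact_mod_cast h2

theorem PL1 (f g h : ℝ → ℝ≥0∞) (hf : Measurable f) (hg : Measurable g) (hh : Measurable h)
    (hFtop : (⨆ x, f x) ≠ ⊤) (hGtop : (⨆ x, g x) ≠ ⊤) (hhtop : ∀ z, h z ≠ ⊤)
    (hyp : ∀ x y, f x * g y ≤ (h ((x + y) / 2)) ^ 2) :
    (∫⁻ x, f x) * (∫⁻ y, g y) ≤ (∫⁻ z, h z) ^ 2 := by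
  set F := ⨆ x, f x with hF
  set G := ⨆ x, g x with hG
  by_cases hF0 : F = 0
  · have : ∀ x, f x = 0 := fun x => le_antisymm (hF0 ▸ le_iSup f x) zero_le
    simp [lintegral_congr this]
  by_cases hG0 : G = 0
  · have : ∀ x, g x = 0 := fun x => le_antisymm (hG0 ▸ le_iSup g x) zero_le
    simp [lintegral_congr this]
  have hfx : ∀ x, f x ≠ ⊤ := fun x => ((le_iSup f x).trans_lt hFtop.lt_top).ne
  have hgx : ∀ x, g x ≠ ⊤ := fun x => ((le_iSup g x).trans_lt hGtop.lt_top).ne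
  -- τ = sqrt(F G) as a real
  set τ : ℝ := Real.sqrt (F.toReal * G.toReal) with hτ
  have hFGpos : 0 < F.toReal * G.toReal := by
    apply mul_pos <;> exact ENNReal.toReal_pos (by assumption) (by assumption)
  have hτpos : 0 < τ := Real.sqrt_pos.2 hFGpos
  have hτ2 : ENNReal.ofReal τ * ENNReal.ofReal τ = F * G := by
    rw [← ENNReal.ofReal_mul hτpos.le, Real.mul_self_sqrt hFGpos.le,
      ENNReal.ofReal_mul (ENNReal.toReal_nonneg), ENNReal.ofReal_toReal hFtop,
      ENNReal.ofReal_toReal hGtop]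
  have hoτ0 : ENNReal.ofReal τ ≠ 0 := by simp [hτpos]
  have hoτt : ENNReal.ofReal τ ≠ ⊤ := ENNReal.ofReal_ne_top
  set cf := F / ENNReal.ofReal τ with hcf
  set cg := G / ENNReal.ofReal τ with hcg
  have hcf0 : cf ≠ 0 := by
    simp only [hcf, ne_eq, ENNReal.div_eq_zero_iff]; tauto
  have hcft : cf ≠ ⊤ := by
    simp only [hcf, ne_eq, ENNReal.div_eq_top]; tauto
  have hcg0 : cg ≠ 0 := by
    simp only [hcg, ne_eq, ENNReal.div_eq_zero_iff]; tauto
  have hcgt : cg ≠ ⊤ := by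
    simp only [hcg, ne_eq, ENNReal.div_eq_top]; tauto
  have hcfg : cf * cg = 1 := by
    rw [hcf, hcg, div_eq_mul_inv, div_eq_mul_inv, mul_mul_mul_comm,
      ← ENNReal.mul_inv (Or.inl hoτ0) (Or.inl hoτt), hτ2,
      ENNReal.mul_inv_cancel (mul_ne_zero hF0 hG0) (ENNReal.mul_ne_top hFtop hGtop)]
  have hcfτ : ENNReal.ofReal τ * cf = F := ENNReal.mul_div_cancel hoτ0 hoτt
  have hcgτ : ENNReal.ofReal τ * cg = G := ENNReal.mul_div_cancel hoτ0 hoτt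
  -- level sets
  set S : ℝ → Set ℝ := fun t => {x | ENNReal.ofReal t * cf < f x} with hS
  set T : ℝ → Set ℝ := fun t => {x | ENNReal.ofReal t * cg < g x} with hT
  set M : ℝ → Set ℝ := fun t => {z | ENNReal.ofReal t < h z} with hM
  -- pointwise bound for every t > 0
  have key : ∀ t ∈ Ioi (0:ℝ), 2⁻¹ * volume (S t) + 2⁻¹ * volume (T t) ≤ volume (M t) := by
    intro t ht
    by_cases htτ : t < τ
    · have hSne : (S t).Nonempty := by
        have : ENNReal.ofReal t * cf < F := by
          rw [← hcfτ]
          exact ENNReal.mul_lt_mul_left hcf0 hcft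
            ((ENNReal.ofReal_lt_ofReal_iff hτpos).2 htτ)
        obtain ⟨x, hx⟩ := lt_iSup_iff.1 this
        exact ⟨x, hx⟩
      have hTne : (T t).Nonempty := by
        have : ENNReal.ofReal t * cg < G := by
          rw [← hcgτ]
          exact ENNReal.mul_lt_mul_left hcg0 hcgt
            ((ENNReal.ofReal_lt_ofReal_iff hτpos).2 htτ)
        obtain ⟨x, hx⟩ := lt_iSup_iff.1 this
        exact ⟨x, hx⟩
      have hSmeas : MeasurableSet (S t) := hf measurableSet_Ioi
      have hTmeas : MeasurableSet (T t) := hg measurableSet_Ioi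
      have hMmeas : MeasurableSet (M t) := hh measurableSet_Ioi
      have hUmeas : MeasurableSet ((fun u : ℝ => 2⁻¹ * u) ⁻¹' (M t)) :=
        (measurable_const_mul 2⁻¹) hMmeas
      have hsub : S t + T t ⊆ (fun u : ℝ => 2⁻¹ * u) ⁻¹' (M t) := by
        rintro _ ⟨x, hx, y, hy, rfl⟩
        have h1 : (ENNReal.ofReal t * cf) * (ENNReal.ofReal t * cg) < f x * g y :=
          ENNReal.mul_lt_mul hx hy
        have h2 : (ENNReal.ofReal t * cf) * (ENNReal.ofReal t * cg)
            = ENNReal.ofReal t * ENNReal.ofReal t := by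
          rw [mul_mul_mul_comm, hcfg, mul_one]
        have h3 : ENNReal.ofReal t * ENNReal.ofReal t < (h ((x + y)/2))^2 :=
          (h2 ▸ h1).trans_le (hyp x y)
        have h4 : ENNReal.ofReal t < h ((x + y)/2) := by
          by_contra hcon
          push_neg at hcon
          have h5 : (h ((x + y)/2))^2 ≤ ENNReal.ofReal t * ENNReal.ofReal t := by
            rw [pow_two]; exact mul_le_mul' hcon hcon
          exact absurd (h3.trans_le h5) (lt_irrefl _)
        show ENNReal.ofReal t < h (2⁻¹ * (x + y))
        rwa [show (2:ℝ)⁻¹ * (x + y) = (x + y)/2 by ring]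
      have hvol : volume ((fun u : ℝ => 2⁻¹ * u) ⁻¹' (M t)) = 2 * volume (M t) := by
        rw [Real.volume_preimage_mul_left (by norm_num : (2:ℝ)⁻¹ ≠ 0)]
        norm_num
      have := sumset_meas (S t) (T t) _ hSmeas hTmeas hSne hTne hsub
      rw [hvol] at this
      calc 2⁻¹ * volume (S t) + 2⁻¹ * volume (T t)
          = 2⁻¹ * (volume (S t) + volume (T t)) := by rw [mul_add]
        _ ≤ 2⁻¹ * (2 * volume (M t)) := by gcongr
        _ = volume (M t) := by
            rw [← mul_assoc, ENNReal.inv_mul_cancel (by norm_num) (by norm_num), one_mul]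
    · -- t ≥ τ : S t and T t are empty
      push_neg at htτ
      have hSe : S t = ∅ := by
        ext x
        simp only [hS, mem_setOf_eq, mem_empty_iff_false, iff_false, not_lt]
        calc f x ≤ F := le_iSup f x
          _ = ENNReal.ofReal τ * cf := hcfτ.symm
          _ ≤ ENNReal.ofReal t * cf := mul_le_mul_left (ENNReal.ofReal_le_ofReal htτ) cf
      have hTe : T t = ∅ := by
        ext x
        simp only [hT, mem_setOf_eq, mem_empty_iff_false, iff_false, not_lt]
        calc g x ≤ G := le_iSup g x
          _ = ENNReal.ofReal τ * cg := hcgτ.symm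
          _ ≤ ENNReal.ofReal t * cg := mul_le_mul_left (ENNReal.ofReal_le_ofReal htτ) cg
      simp [hSe, hTe]
  -- layer cake for h
  set If := ∫⁻ x, f x with hIf
  set Ig := ∫⁻ x, g x with hIg
  set Ih := ∫⁻ z, h z with hIh
  have layer_h : Ih = ∫⁻ t in Ioi (0:ℝ), volume (M t) := by
    have e1 : Ih = ∫⁻ z, ENNReal.ofReal ((h z).toReal) := by
      refine lintegral_congr fun z => ?_
      rw [ENNReal.ofReal_toReal (hhtop z)]
    rw [e1, lintegral_eq_lintegral_meas_lt volume
      (Filter.Eventually.of_forall fun z => ENNReal.toReal_nonneg) hh.ennreal_toReal.aemeasurable]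
    refine setLIntegral_congr_fun measurableSet_Ioi (fun t ht => ?_)
    congr 1
    ext z
    simp only [mem_setOf_eq, hM]
    rw [← ENNReal.ofReal_lt_iff_lt_toReal (le_of_lt ht) (hhtop z)]
  -- layer cake for f and g
  have layer_fg : ∀ (φ : ℝ → ℝ≥0∞) (c : ℝ≥0∞), Measurable φ → (∀ x, φ x ≠ ⊤) →
      c ≠ 0 → c ≠ ⊤ →
      (∫⁻ t in Ioi (0:ℝ), volume {x | ENNReal.ofReal t * c < φ x}) = (∫⁻ x, φ x) / c := by
    intro φ c hφ hφt hc0 hct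
    have e1 : ∀ t : ℝ, 0 < t →
        {x | ENNReal.ofReal t * c < φ x} = {x | t < ((φ x) / c).toReal} := by
      intro t ht
      ext x
      simp only [mem_setOf_eq]
      rw [← ENNReal.ofReal_lt_iff_lt_toReal ht.le
        (by simp [ENNReal.div_eq_top, hφt x, hc0]),
        ENNReal.lt_div_iff_mul_lt (Or.inl hc0) (Or.inl hct)]
    have e2 : (∫⁻ t in Ioi (0:ℝ), volume {x | ENNReal.ofReal t * c < φ x})
        = ∫⁻ t in Ioi (0:ℝ), volume {x | t < ((φ x) / c).toReal} :=
      setLIntegral_congr_fun measurableSet_Ioi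
        (fun t ht => by simp only [e1 t ht])
    rw [e2, ← lintegral_eq_lintegral_meas_lt (f := fun x => (φ x / c).toReal) volume
      (Filter.Eventually.of_forall fun z => ENNReal.toReal_nonneg)
      ((hφ.div measurable_const).ennreal_toReal.aemeasurable)]
    have e3 : ∀ x, ENNReal.ofReal ((φ x / c).toReal) = φ x / c := fun x =>
      ENNReal.ofReal_toReal (by simp [ENNReal.div_eq_top, hφt x, hc0])
    rw [lintegral_congr e3]
    rw [div_eq_mul_inv, ← lintegral_mul_const' c⁻¹ _ (by simp [hc0])]
    simp [div_eq_mul_inv]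
  have hSmeas_t : Measurable fun t : ℝ => volume (S t) :=
    Antitone.measurable (fun t t' htt' => measure_mono (fun x hx =>
      lt_of_le_of_lt (mul_le_mul_left (ENNReal.ofReal_le_ofReal htt') cf) hx))
  have hTmeas_t : Measurable fun t : ℝ => volume (T t) :=
    Antitone.measurable (fun t t' htt' => measure_mono (fun x hx =>
      lt_of_le_of_lt (mul_le_mul_left (ENNReal.ofReal_le_ofReal htt') cg) hx))
  have main : 2⁻¹ * (If / cf) + 2⁻¹ * (Ig / cg) ≤ Ih := by
    have i1 : ∫⁻ t in Ioi (0:ℝ), (2⁻¹ * volume (S t) + 2⁻¹ * volume (T t)) ≤ Ih := by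
      rw [layer_h]
      refine lintegral_mono_ae ?_
      exact (ae_restrict_mem measurableSet_Ioi).mono fun t ht => key t ht
    have i2 : ∫⁻ t in Ioi (0:ℝ), (2⁻¹ * volume (S t) + 2⁻¹ * volume (T t))
        = 2⁻¹ * (If / cf) + 2⁻¹ * (Ig / cg) := by
      rw [lintegral_add_left (by exact (hSmeas_t.const_mul _)) ,
        lintegral_const_mul' _ _ (by norm_num), lintegral_const_mul' _ _ (by norm_num)]
      rw [layer_fg f cf hf hfx hcf0 hcft, layer_fg g cg hg hgx hcg0 hcgt]
    rwa [i2] at i1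
  -- finish with AM-GM
  have hx : If = (If / cf) * cf := (ENNReal.div_mul_cancel hcf0 hcft).symm
  have hy : Ig = (Ig / cg) * cg := (ENNReal.div_mul_cancel hcg0 hcgt).symm
  calc If * Ig = ((If / cf) * (Ig / cg)) * (cf * cg) := by
        conv_lhs => rw [hx, hy]
        ring
    _ = (If / cf) * (Ig / cg) := by rw [hcfg, mul_one]
    _ ≤ (2⁻¹ * ((If / cf) + (Ig / cg)))^2 := enn_amgm _ _
    _ ≤ Ih^2 := by
        refine pow_le_pow_left' ?_ 2
        rw [mul_add]; exact main

section Step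

set_option linter.unusedSectionVars false
variable {E : Type*} [NormedAddCommGroup E] [MeasureSpace E]
  [ProperSpace E] [SigmaFinite (volume : Measure E)] [BorelSpace E]
  [IsFiniteMeasureOnCompacts (volume : Measure E)]

lemma slice_compact {A : Set (ℝ × E)} (hA : IsCompact A) (x : ℝ) :
    IsCompact (Prod.mk x ⁻¹' A) := by
  have : Prod.mk x ⁻¹' A = Prod.snd '' (A ∩ (Prod.fst ⁻¹' {x})) := by
    ext y
    simp only [mem_preimage, mem_image, mem_inter_iff, mem_singleton_iff]
    constructor
    · intro h; exact ⟨(x, y), ⟨h, rfl⟩, rfl⟩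
    · rintro ⟨⟨a, b⟩, ⟨hab, rfl⟩, rfl⟩; exact hab
  rw [this]
  exact ((hA.inter_right (isClosed_singleton.preimage continuous_fst)).image continuous_snd)

lemma slice_bound {A : Set (ℝ × E)} (hA : IsCompact A) :
    ∃ V : ℝ≥0∞, V ≠ ⊤ ∧ ∀ x : ℝ, volume (Prod.mk x ⁻¹' A) ≤ V := by
  obtain ⟨r, hr⟩ := hA.isBounded.subset_closedBall 0
  refine ⟨volume (Metric.closedBall (0:E) r),
    (isCompact_closedBall _ _).measure_lt_top.ne, fun x => ?_⟩
  refine measure_mono fun y hy => ?_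
  have := hr hy
  simp only [Metric.mem_closedBall, dist_zero_right] at this ⊢
  calc ‖y‖ ≤ max ‖x‖ ‖y‖ := le_max_right _ _
    _ = ‖(x, y)‖ := rfl
    _ ≤ r := this

lemma mulBM_step {n : ℕ}
    (IH : ∀ S T : Set E, IsCompact S → IsCompact T → S.Nonempty → T.Nonempty →
      4 ^ n * (volume S * volume T) ≤ (volume (S + T)) ^ 2)
    (A B : Set (ℝ × E)) (hA : IsCompact A) (hB : IsCompact B)
    (hAne : A.Nonempty) (hBne : B.Nonempty) :
    4 ^ (n + 1) * (volume A * volume B) ≤ (volume (A + B)) ^ 2 := by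
  set W := A + B with hW
  have hWc : IsCompact W := hA.add hB
  set f : ℝ → ℝ≥0∞ := fun x => volume (Prod.mk x ⁻¹' A) with hf
  set g : ℝ → ℝ≥0∞ := fun y => volume (Prod.mk y ⁻¹' B) with hg
  set H : ℝ → ℝ≥0∞ := fun u => volume (Prod.mk u ⁻¹' W) with hH
  have hfm : Measurable f := measurable_measure_prodMk_left hA.measurableSet
  have hgm : Measurable g := measurable_measure_prodMk_left hB.measurableSet
  have hHm : Measurable H := measurable_measure_prodMk_left hWc.measurableSet
  obtain ⟨VA, hVA, hVAb⟩ := slice_bound hA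
  obtain ⟨VB, hVB, hVBb⟩ := slice_bound hB
  obtain ⟨VW, hVW, hVWb⟩ := slice_bound hWc
  have hvolA : volume A = ∫⁻ x, f x := by
    rw [Measure.volume_eq_prod, Measure.prod_apply hA.measurableSet]
  have hvolB : volume B = ∫⁻ y, g y := by
    rw [Measure.volume_eq_prod, Measure.prod_apply hB.measurableSet]
  have hvolW : volume W = ∫⁻ u, H u := by
    rw [Measure.volume_eq_prod, Measure.prod_apply hWc.measurableSet]
  -- apply PL1
  set f' : ℝ → ℝ≥0∞ := fun x => 4 ^ n * f x with hf'
  set h : ℝ → ℝ≥0∞ := fun m => H (2 * m) with hh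
  have key : (∫⁻ x, f' x) * (∫⁻ y, g y) ≤ (∫⁻ m, h m) ^ 2 := by
    refine PL1 f' g h (hfm.const_mul _) hgm (hHm.comp (measurable_const_mul 2)) ?_ ?_ ?_ ?_
    · refine ne_top_of_le_ne_top (by
        exact ENNReal.mul_ne_top (by simp) hVA : (4:ℝ≥0∞) ^ n * VA ≠ ⊤) ?_
      exact iSup_le fun x => mul_le_mul_right (hVAb x) _
    · exact ne_top_of_le_ne_top hVB (iSup_le fun y => hVBb y)
    · exact fun z => ne_top_of_le_ne_top hVW (hVWb _)
    · intro x y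
      by_cases hxe : (Prod.mk x ⁻¹' A).Nonempty
      · by_cases hye : (Prod.mk y ⁻¹' B).Nonempty
        · have hsub : Prod.mk x ⁻¹' A + Prod.mk y ⁻¹' B ⊆ Prod.mk (x + y) ⁻¹' W := by
            rintro _ ⟨a, ha, b, hb, rfl⟩
            exact ⟨(x, a), ha, (y, b), hb, rfl⟩
          have h1 := IH _ _ (slice_compact hA x) (slice_compact hB y) hxe hye
          have h2 : (volume (Prod.mk x ⁻¹' A + Prod.mk y ⁻¹' B))^2
              ≤ (H (x + y))^2 := by
            exact pow_le_pow_left' (measure_mono hsub) 2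
          have harg : 2 * ((x + y) / 2) = x + y := by ring
          calc f' x * g y = 4 ^ n * (f x * g y) := by rw [hf']; ring
            _ ≤ (H (x + y))^2 := h1.trans h2
            _ = (h ((x + y) / 2))^2 := by simp only [hh]; rw [harg]
        · have hgy : g y = 0 := by
            have he := not_nonempty_iff_eq_empty.1 hye
            simp [hg, he]
          simp [hgy]
      · have hfx : f x = 0 := by
          have he := not_nonempty_iff_eq_empty.1 hxe
          simp [hf, he]
        have hfx' : f' x = 0 := by simp [hf', hfx]
        simp [hfx']
  have e1 : (∫⁻ x, f' x) = 4 ^ n * volume A := by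
    rw [hvolA, hf', lintegral_const_mul' _ _ (by simp)]
  have e2 : (∫⁻ m, h m) = 2⁻¹ * volume W := by
    have hmap : Measure.map (fun m : ℝ => 2 * m) volume
        = ENNReal.ofReal |(2:ℝ)⁻¹| • volume := Real.map_volume_mul_left (by norm_num)
    have : ∫⁻ m, h m = ∫⁻ u, H u ∂(Measure.map (fun m : ℝ => 2 * m) volume) := by
      rw [lintegral_map hHm (measurable_const_mul 2)]
    rw [this, hmap, lintegral_smul_measure, ← hvolW]
    congr 1
    rw [abs_of_nonneg (by norm_num : (0:ℝ) ≤ 2⁻¹),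
      ENNReal.ofReal_inv_of_pos (by norm_num), ENNReal.ofReal_ofNat]
  have e3 : (2⁻¹ * volume W)^2 = 4⁻¹ * (volume W)^2 := by
    rw [mul_pow, ← ENNReal.inv_pow]
    norm_num
  have key' : 4 ^ n * (volume A * volume B) ≤ 4⁻¹ * (volume W)^2 := by
    calc 4 ^ n * (volume A * volume B) = (∫⁻ x, f' x) * (∫⁻ y, g y) := by
          rw [e1, ← hvolB]; ring
      _ ≤ (∫⁻ m, h m)^2 := key
      _ = (2⁻¹ * volume W)^2 := by rw [e2]
      _ = 4⁻¹ * (volume W)^2 := e3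
  calc 4 ^ (n + 1) * (volume A * volume B)
      = 4 * (4 ^ n * (volume A * volume B)) := by ring
    _ ≤ 4 * (4⁻¹ * (volume W)^2) := mul_le_mul_right key' 4
    _ = (volume W)^2 := by
        rw [← mul_assoc, ENNReal.mul_inv_cancel (by norm_num) (by norm_num), one_mul]

end Step

theorem mulBM : ∀ (n : ℕ) (S T : Set (Fin n → ℝ)), IsCompact S → IsCompact T →
    S.Nonempty → T.Nonempty → 4 ^ n * (volume S * volume T) ≤ (volume (S + T)) ^ 2 := by
  intro n
  induction n with
  | zero =>
    intro S T hS hT hSne hTne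
    have h1 : S = univ := hSne.eq_univ
    have h2 : T = univ := hTne.eq_univ
    have h3 : S + T = univ := (hSne.add hTne).eq_univ
    have hu : volume (univ : Set (Fin 0 → ℝ)) = 1 := by
      simp [MeasureTheory.volume_pi, Measure.pi_univ]
    rw [h3, h1, h2, hu]
    simp
  | succ n IH =>
    intro S T hS hT hSne hTne
    set φ : (Fin (n+1) → ℝ) ≃ᵐ ℝ × (Fin n → ℝ) :=
      MeasurableEquiv.piFinSuccAbove (fun _ => ℝ) 0 with hφ
    have hmp : MeasurePreserving φ volume volume :=
      volume_preserving_piFinSuccAbove (fun _ => ℝ) 0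
    have hcont : Continuous φ := by
      show Continuous fun x : Fin (n+1) → ℝ => ((x 0, fun j => x (Fin.succAbove 0 j)) : ℝ × (Fin n → ℝ))
      exact (continuous_apply 0).prodMk (continuous_pi fun j => continuous_apply _)
    have hadd : ∀ x y : Fin (n+1) → ℝ, φ (x + y) = φ x + φ y := by
      intro x y; rfl
    have himg : ∀ X Y : Set (Fin (n+1) → ℝ), φ '' (X + Y) = φ '' X + φ '' Y := by
      intro X Y
      ext p
      constructor
      · rintro ⟨_, ⟨a, ha, b, hb, rfl⟩, rfl⟩
        exact ⟨φ a, mem_image_of_mem _ ha, φ b, mem_image_of_mem _ hb, (hadd a b).symm⟩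
      · rintro ⟨_, ⟨a, ha, rfl⟩, _, ⟨b, hb, rfl⟩, rfl⟩
        exact ⟨a + b, ⟨a, ha, b, hb, rfl⟩, hadd a b⟩
    have hvol : ∀ X : Set (Fin (n+1) → ℝ), IsCompact X → volume (φ '' X) = volume X := by
      intro X hX
      rw [← hmp.measure_preimage (hX.image hcont).measurableSet.nullMeasurableSet]
      congr 1
      exact Equiv.preimage_image φ.toEquiv X
    have step := mulBM_step IH (φ '' S) (φ '' T) (hS.image hcont) (hT.image hcont)
      (hSne.image φ) (hTne.image φ)
    rw [← himg] at step
    rw [hvol S hS, hvol T hT, hvol _ (hS.add hT)] at step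
    exact step

theorem stmt0 (n : ℕ) (hn : 2 ≤ n) (K : Set (Fin n → ℝ))
    (hKconv : Convex ℝ K) (hKcomp : IsCompact K) (hKint : (interior K).Nonempty)
    (lam : ℝ) (hlam : lam ∈ Set.Icc (0:ℝ) 1) :
    volume (K - lam • K) ≤ ENNReal.ofReal ((1 + lam) ^ n / 2 ^ n) * volume (K - K) := by
  obtain ⟨hlam0, hlam1⟩ := hlam
  have hKne : K.Nonempty := Nonempty.mono interior_subset hKint
  set A : Set (Fin n → ℝ) := K - lam • K with hA
  set D : Set (Fin n → ℝ) := K - K with hD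
  -- compactness
  have hlamKc : IsCompact (lam • K) := hKcomp.smul lam
  have hAc : IsCompact A := by
    rw [hA, sub_eq_add_neg]
    exact hKcomp.add hlamKc.neg
  have hAne : A.Nonempty := by
    obtain ⟨x, hx⟩ := hKne
    exact ⟨x - lam • x, x, hx, lam • x, smul_mem_smul_set hx, rfl⟩
  -- the key identity : A + (-A) = (1+lam) • D
  have hnegA : -A = lam • K - K := by
    ext x
    simp only [mem_neg, hA, mem_sub]
    constructor
    · rintro ⟨a, ha, b, hb, hab⟩
      exact ⟨b, hb, a, ha, by linear_combination (norm := module) -hab⟩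
    · rintro ⟨a, ha, b, hb, hab⟩
      exact ⟨b, hb, a, ha, by linear_combination (norm := module) -hab⟩
  have hsum : A + (-A) = (1 + lam) • D := by
    rw [hnegA, hA]
    have e1 : K - lam • K + (lam • K - K) = (K + lam • K) - (lam • K + K) := by
      ext x
      simp only [mem_add, mem_sub]
      constructor
      · rintro ⟨_, ⟨a, ha, b, hb, rfl⟩, _, ⟨c, hc, d, hd, rfl⟩, rfl⟩
        exact ⟨a + c, ⟨a, ha, c, hc, rfl⟩, b + d, ⟨b, hb, d, hd, rfl⟩, by module⟩
      · rintro ⟨_, ⟨a, ha, c, hc, rfl⟩, _, ⟨b, hb, d, hd, rfl⟩, rfl⟩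
        exact ⟨a - b, ⟨a, ha, b, hb, rfl⟩, c - d, ⟨c, hc, d, hd, rfl⟩, by module⟩
    have e2 : K + lam • K = (1 + lam) • K := by
      rw [hKconv.add_smul zero_le_one hlam0, one_smul]
    have e3 : lam • K + K = (1 + lam) • K := by
      rw [add_comm (lam • K), e2]
    have e4 : (1 + lam) • D = (1 + lam) • K - (1 + lam) • K := by
      rw [hD]
      ext x
      simp only [mem_smul_set, mem_sub]
      constructor
      · rintro ⟨_, ⟨a, ha, b, hb, rfl⟩, rfl⟩
        exact ⟨(1+lam) • a, ⟨a, ha, rfl⟩, (1+lam) • b, ⟨b, hb, rfl⟩, by module⟩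
      · rintro ⟨_, ⟨a, ha, rfl⟩, _, ⟨b, hb, rfl⟩, rfl⟩
        exact ⟨a - b, ⟨a, ha, b, hb, rfl⟩, by module⟩
    rw [e1, e2, e3, e4]
  -- volume of -A
  have hvnegA : volume (-A) = volume A := by
    have : -A = (-1 : ℝ) • A := by
      ext x; simp only [mem_neg, mem_smul_set]
      constructor
      · intro hx; exact ⟨-x, hx, by module⟩
      · rintro ⟨a, ha, rfl⟩; simpa using ha
    rw [this, Measure.addHaar_smul]
    simp
  -- apply mulBM
  have step := mulBM n A (-A) hAc hAc.neg hAne (by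
    obtain ⟨a, ha⟩ := hAne; exact ⟨-a, by simpa using ha⟩)
  rw [hvnegA, hsum] at step
  have hDvol : volume ((1 + lam) • D) = ENNReal.ofReal ((1 + lam) ^ n) * volume D := by
    rw [Measure.addHaar_smul]
    congr 2
    rw [Module.finrank_fin_fun, abs_of_nonneg (by positivity)]
  rw [hDvol] at step
  -- extract square root
  have sqrt_step : 2 ^ n * volume A ≤ ENNReal.ofReal ((1 + lam) ^ n) * volume D := by
    by_contra hcon
    push_neg at hcon
    have h1 : (ENNReal.ofReal ((1 + lam) ^ n) * volume D) ^ 2 < (2 ^ n * volume A) ^ 2 :=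
      ENNReal.pow_lt_pow_left (by norm_num) hcon
    have h2 : (2 ^ n * volume A) ^ 2 = 4 ^ n * (volume A * volume A) := by
      rw [mul_pow, ← pow_mul, mul_comm n 2, pow_mul]
      norm_num
      ring
    rw [h2] at h1
    exact absurd step (not_le.2 h1)
  -- final arithmetic
  have h2n0 : ((2:ℝ≥0∞) ^ n) ≠ 0 := by positivity
  have h2nt : ((2:ℝ≥0∞) ^ n) ≠ ⊤ := by
    exact ENNReal.pow_ne_top (by norm_num)
  have hc : ENNReal.ofReal ((1 + lam) ^ n / 2 ^ n)
      = ENNReal.ofReal ((1 + lam) ^ n) / 2 ^ n := by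
    rw [ENNReal.ofReal_div_of_pos (by positivity)]
    congr 1
    rw [ENNReal.ofReal_pow (by norm_num), ENNReal.ofReal_ofNat]
  rw [hc]
  calc volume A = (2 ^ n)⁻¹ * (2 ^ n * volume A) := by
        rw [← mul_assoc, ENNReal.inv_mul_cancel h2n0 h2nt, one_mul]
    _ ≤ (2 ^ n)⁻¹ * (ENNReal.ofReal ((1 + lam) ^ n) * volume D) :=
        mul_le_mul_right sqrt_step _
    _ = ENNReal.ofReal ((1 + lam) ^ n) / 2 ^ n * volume D := by
        rw [div_eq_mul_inv]; ring
end

section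
/- For every sufficiently large n, every convex body K in R^n with the origin in its interior, and every ε ∈ (0,1], there exists a set N of at most (5/ε)^n points such that K ⊆ ∪_{y∈N}(y + εK). -/
open MeasureTheory Set Pointwise
open scoped ENNReal NNReal

namespace Stmt8Aux

variable {n : ℕ}

private lemma vol_smul (r : ℝ) (hr : 0 ≤ r) (X : Set (Fin n → ℝ)) :
    volume (r • X) = ENNReal.ofReal (r ^ n) * volume X := by
  rw [Measure.addHaar_smul, Module.finrank_fin_fun,
    abs_of_nonneg (pow_nonneg hr n)]

private lemma mem_vadd_iff {v x : Fin n → ℝ} {X : Set (Fin n → ℝ)} :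
    x ∈ v +ᵥ X ↔ x - v ∈ X := by
  rw [Set.mem_vadd_set_iff_neg_vadd_mem]
  simp [sub_eq_neg_add]

private lemma smul_subset_of_le {C : Set (Fin n → ℝ)} (hC : Convex ℝ C)
    (h0 : (0 : Fin n → ℝ) ∈ C) {a b : ℝ} (ha : 0 ≤ a) (hab : a ≤ b) :
    a • C ⊆ b • C := by
  rcases eq_or_lt_of_le (ha.trans hab) with hb | hb
  · have ha0 : a = 0 := le_antisymm (hab.trans hb.ge) ha
    rw [ha0, ← hb]
  · intro x hx
    obtain ⟨c, hc, rfl⟩ := hx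
    refine ⟨(a / b) • c, hC.smul_mem_of_zero_mem h0 hc
      ⟨by positivity, div_le_one_of_le₀ hab hb.le⟩, ?_⟩
    show b • ((a / b) • c) = a • c
    rw [smul_smul]
    congr 1
    field_simp

private lemma vol_sub_preimage (y : Fin n → ℝ) (B : Set (Fin n → ℝ)) :
    volume ((fun z => y - z) ⁻¹' B) = volume B := by
  have h : (fun z : Fin n → ℝ => y - z) = (fun w => y + w) ∘ Neg.neg := by
    funext z; simp [sub_eq_add_neg]
  rw [h, Set.preimage_comp, Measure.measure_preimage_neg, measure_preimage_add]

private lemma kernel_set_eq {W B : Set (Fin n → ℝ)} (z : Fin n → ℝ) :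
    W ∩ (z +ᵥ B) = Prod.mk z ⁻¹' {p : (Fin n → ℝ) × (Fin n → ℝ) | p.2 ∈ W ∧ p.2 - p.1 ∈ B} := by
  ext y
  simp [mem_vadd_iff, and_comm]

private lemma kernel_T_meas {W B : Set (Fin n → ℝ)} (hW : MeasurableSet W)
    (hB : MeasurableSet B) :
    MeasurableSet {p : (Fin n → ℝ) × (Fin n → ℝ) | p.2 ∈ W ∧ p.2 - p.1 ∈ B} := by
  have h1 : MeasurableSet {p : (Fin n → ℝ) × (Fin n → ℝ) | p.2 ∈ W} := measurable_snd hW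
  have h2 : MeasurableSet {p : (Fin n → ℝ) × (Fin n → ℝ) | p.2 - p.1 ∈ B} :=
    (measurable_snd.sub measurable_fst) hB
  exact h1.inter h2

private lemma kernel_meas {W B : Set (Fin n → ℝ)} (hW : MeasurableSet W)
    (hB : MeasurableSet B) :
    Measurable (fun z : Fin n → ℝ => volume (W ∩ (z +ᵥ B))) := by
  have h := measurable_measure_prodMk_left (ν := (volume : Measure (Fin n → ℝ)))
    (kernel_T_meas hW hB)
  have heq : (fun z : Fin n → ℝ => volume (W ∩ (z +ᵥ B)))
      = fun z : Fin n → ℝ =>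
        volume (Prod.mk z ⁻¹' {p : (Fin n → ℝ) × (Fin n → ℝ) | p.2 ∈ W ∧ p.2 - p.1 ∈ B}) := by
    funext z
    rw [kernel_set_eq (W := W) (B := B) z]
  rw [heq]
  exact h

private lemma kernel_int {W B : Set (Fin n → ℝ)} (hW : MeasurableSet W)
    (hB : MeasurableSet B) :
    ∫⁻ z : Fin n → ℝ, volume (W ∩ (z +ᵥ B)) = volume W * volume B := by
  set T : Set ((Fin n → ℝ) × (Fin n → ℝ)) :=
    {p | p.2 ∈ W ∧ p.2 - p.1 ∈ B} with hT
  have hTm : MeasurableSet T := kernel_T_meas hW hB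
  have h1 : ∫⁻ z : Fin n → ℝ, volume (W ∩ (z +ᵥ B)) = (volume.prod volume) T := by
    rw [Measure.prod_apply hTm]
    congr 1
    funext z
    rw [kernel_set_eq z]
  rw [h1, Measure.prod_apply_symm hTm]
  have key : ∀ y : Fin n → ℝ,
      volume ((fun x => (x, y)) ⁻¹' T) = W.indicator (fun _ => volume B) y := by
    intro y
    by_cases hy : y ∈ W
    · have he : ((fun x => (x, y)) ⁻¹' T) = (fun z => y - z) ⁻¹' B := by
        ext z; simp [hT, hy]
      rw [he, vol_sub_preimage, Set.indicator_of_mem hy]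
    · have he : ((fun x => (x, y)) ⁻¹' T) = ∅ := by
        ext z; simp [hT, hy]
      rw [he, measure_empty, Set.indicator_of_notMem hy]
  calc ∫⁻ y, volume ((fun x => (x, y)) ⁻¹' T)
      = ∫⁻ y, W.indicator (fun _ => volume B) y := by
        congr 1; funext y; exact key y
    _ = volume B * volume W := by
        rw [lintegral_indicator hW, setLIntegral_const]
    _ = volume W * volume B := mul_comm _ _

private lemma exists_avg {W B D : Set (Fin n → ℝ)} (hW : MeasurableSet W)
    (hB : MeasurableSet B) (hD : MeasurableSet D)
    (hsupp : ∀ p ∈ W, ∀ x ∈ B, p - x ∈ D)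
    (hDfin : volume D ≠ ⊤) (hWfin : volume W ≠ ⊤) (hBfin : volume B ≠ ⊤) :
    ∃ z : Fin n → ℝ, volume W * volume B ≤ 2 * volume D * volume (W ∩ (z +ᵥ B)) := by
  by_cases h0 : volume W * volume B = 0
  · exact ⟨0, by simp [h0]⟩
  by_contra hcon
  push_neg at hcon
  -- f z = 0 off D
  have hoff : ∀ z ∉ D, volume (W ∩ (z +ᵥ B)) = 0 := by
    intro z hz
    have : W ∩ (z +ᵥ B) = ∅ := by
      ext p
      simp only [Set.mem_inter_iff, Set.mem_empty_iff_false, iff_false, not_and]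
      intro hp hpz
      rw [mem_vadd_iff] at hpz
      exact hz (by simpa using hsupp p hp (p - z) hpz)
    simp [this]
  have hrestrict : ∫⁻ z in D, volume (W ∩ (z +ᵥ B)) = volume W * volume B := by
    have hzero : ∫⁻ z in Dᶜ, volume (W ∩ (z +ᵥ B)) = 0 := by
      rw [setLIntegral_congr_fun hD.compl
        (fun z hz => hoff z hz)]
      simp
    have hsplit := lintegral_add_compl (μ := volume)
      (fun z : Fin n → ℝ => volume (W ∩ (z +ᵥ B))) hD
    rw [hzero, add_zero] at hsplit
    rw [hsplit, kernel_int hW hB]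
  -- multiply by 2 vol D inside
  have hDpos : volume D ≠ 0 := by
    intro hD0
    have : volume W * volume B ≤ volume W * volume D := by
      rw [← hrestrict]
      calc ∫⁻ z in D, volume (W ∩ (z +ᵥ B))
          ≤ ∫⁻ _ in D, volume W :=
            setLIntegral_mono measurable_const
              (fun z _ => measure_mono Set.inter_subset_left)
        _ = volume W * volume D := setLIntegral_const _ _
    rw [hD0, mul_zero] at this
    exact h0 (le_antisymm this (zero_le))
  have hbig : 2 * volume D * (volume W * volume B)
      ≤ (volume W * volume B) * volume D := by
    calc 2 * volume D * (volume W * volume B)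
        = 2 * volume D * ∫⁻ z in D, volume (W ∩ (z +ᵥ B)) := by rw [hrestrict]
      _ = ∫⁻ z in D, 2 * volume D * volume (W ∩ (z +ᵥ B)) := by
          rw [lintegral_const_mul _ (kernel_meas hW hB)]
      _ ≤ ∫⁻ _ in D, volume W * volume B :=
          setLIntegral_mono measurable_const (fun z _ => (hcon z).le)
      _ = (volume W * volume B) * volume D := setLIntegral_const _ _
  -- contradiction: t < 2 t
  set t := volume D * (volume W * volume B) with ht
  have htfin : t ≠ ⊤ := by
    simp only [ht]
    exact ENNReal.mul_ne_top hDfin (ENNReal.mul_ne_top hWfin hBfin)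
  have htpos : t ≠ 0 := by
    simp only [ht]
    exact mul_ne_zero hDpos h0
  have h2t : 2 * t ≤ t := by
    calc 2 * t = 2 * volume D * (volume W * volume B) := by rw [ht]; ring
      _ ≤ (volume W * volume B) * volume D := hbig
      _ = t := by rw [ht]; ring
  have : t < 2 * t := by
    have := ENNReal.lt_add_right htfin htpos
    calc t < t + t := this
      _ = 2 * t := (two_mul t).symm
  exact absurd (lt_of_lt_of_le this h2t) (lt_irrefl t)


private lemma stage1 {W₀ B D : Set (Fin n → ℝ)} (hW₀ : MeasurableSet W₀)
    (hB : MeasurableSet B) (hD : MeasurableSet D)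
    (hsupp : ∀ p ∈ W₀, ∀ x ∈ B, p - x ∈ D)
    (hDfin : volume D ≠ ⊤) (hWfin : volume W₀ ≠ ⊤) (hBfin : volume B ≠ ⊤)
    (hBD : volume B ≤ volume D) (hDpos : volume D ≠ 0) :
    ∀ m : ℕ, ∃ F : Finset (Fin n → ℝ), F.card ≤ m ∧
      (volume (W₀ \ ⋃ y ∈ F, y +ᵥ B)).toReal ≤
        (volume W₀).toReal *
          (1 - (volume B).toReal / (2 * (volume D).toReal)) ^ m := by
  have hdpos : 0 < (volume D).toReal := ENNReal.toReal_pos hDpos hDfin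
  have hq1 : (volume B).toReal / (2 * (volume D).toReal) ≤ 1 := by
    rw [div_le_one (by linarith)]
    have : (volume B).toReal ≤ (volume D).toReal :=
      ENNReal.toReal_mono hDfin hBD
    linarith
  have hq0 : 0 ≤ (volume B).toReal / (2 * (volume D).toReal) := by positivity
  intro m
  induction m with
  | zero =>
    refine ⟨∅, le_refl _, ?_⟩
    simp
  | succ m ih =>
    obtain ⟨F, hcard, hle⟩ := ih
    have hmeasU : MeasurableSet (⋃ y ∈ F, y +ᵥ B) :=
      MeasurableSet.biUnion F.countable_toSet (fun y _ => hB.const_vadd y)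
    set W : Set (Fin n → ℝ) := W₀ \ ⋃ y ∈ F, y +ᵥ B with hWdef
    have hWmeas : MeasurableSet W := hW₀.diff hmeasU
    have hWsub : W ⊆ W₀ := Set.diff_subset
    have hWfin' : volume W ≠ ⊤ :=
      (lt_of_le_of_lt (measure_mono hWsub) (lt_top_iff_ne_top.mpr hWfin)).ne
    obtain ⟨z, hz⟩ := exists_avg hWmeas hB hD
      (fun p hp x hx => hsupp p (hWsub hp) x hx) hDfin hWfin' hBfin
    refine ⟨insert z F, ?_, ?_⟩
    · exact (Finset.card_insert_le _ _).trans (Nat.succ_le_succ hcard)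
    · have hset : W₀ \ ⋃ y ∈ insert z F, y +ᵥ B = W \ (z +ᵥ B) := by
        rw [Finset.set_biUnion_insert, Set.union_comm, ← Set.diff_diff]
      rw [hset]
      -- real arithmetic step
      have hvB : MeasurableSet (z +ᵥ B) := hB.const_vadd z
      have hadd : volume (W ∩ (z +ᵥ B)) + volume (W \ (z +ᵥ B)) = volume W :=
        measure_inter_add_diff W hvB
      have hIfin : volume (W ∩ (z +ᵥ B)) ≠ ⊤ :=
        (lt_of_le_of_lt (measure_mono Set.inter_subset_left)
          (lt_top_iff_ne_top.mpr hWfin')).ne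
      have hdiff_fin : volume (W \ (z +ᵥ B)) ≠ ⊤ :=
        (lt_of_le_of_lt (measure_mono Set.diff_subset)
          (lt_top_iff_ne_top.mpr hWfin')).ne
      set w := (volume W).toReal with hw
      set i := (volume (W ∩ (z +ᵥ B))).toReal with hi
      set wd := (volume (W \ (z +ᵥ B))).toReal with hwd
      set b := (volume B).toReal with hb
      set d := (volume D).toReal with hd
      have hw_eq : i + wd = w := by
        rw [hi, hwd, hw, ← ENNReal.toReal_add hIfin hdiff_fin, hadd]
      have hwb : w * b ≤ 2 * d * i := by
        have := ENNReal.toReal_mono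
          (ENNReal.mul_ne_top (ENNReal.mul_ne_top (by simp) hDfin) hIfin) hz
        rw [ENNReal.toReal_mul] at this
        rw [ENNReal.toReal_mul, ENNReal.toReal_mul] at this
        simpa using this
      have hwnn : 0 ≤ w := ENNReal.toReal_nonneg
      have hstep : wd ≤ w * (1 - b / (2 * d)) := by
        have h2d : 0 < 2 * d := by linarith
        have : w * b / (2 * d) ≤ i := by
          rw [div_le_iff₀ h2d]
          calc w * b ≤ 2 * d * i := hwb
            _ = i * (2 * d) := by ring
        have : wd = w - i := by linarith
        rw [this]
        have : w * (1 - b / (2 * d)) = w - w * b / (2 * d) := by ring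
        rw [this]
        linarith
      have hwle : w ≤ (volume W₀).toReal * (1 - b / (2 * d)) ^ m := hle
      calc wd ≤ w * (1 - b / (2 * d)) := hstep
        _ ≤ ((volume W₀).toReal * (1 - b / (2 * d)) ^ m) * (1 - b / (2 * d)) := by
            apply mul_le_mul_of_nonneg_right hwle
            linarith
        _ = (volume W₀).toReal * (1 - b / (2 * d)) ^ (m + 1) := by ring

private lemma packing {U A W : Set (Fin n → ℝ)} (hA : MeasurableSet A)
    (hUA : ∀ u ∈ U, (u +ᵥ A) ⊆ W) (hApos : volume A ≠ 0) (hAfin : volume A ≠ ⊤)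
    (hWfin : volume W ≠ ⊤) :
    ∃ F : Finset (Fin n → ℝ), (↑F : Set (Fin n → ℝ)) ⊆ U ∧
      (F.card : ℝ≥0∞) * volume A ≤ volume W ∧
      ∀ u ∈ U, ∃ y ∈ F, ¬ Disjoint (u +ᵥ A) (y +ᵥ A) := by
  classical
  set P : Finset (Fin n → ℝ) → Prop :=
    fun F => (↑F : Set (Fin n → ℝ)) ⊆ U ∧
      (↑F : Set (Fin n → ℝ)).PairwiseDisjoint (· +ᵥ A) with hP
  have hbound : ∀ F, P F → (F.card : ℝ≥0∞) * volume A ≤ volume W := by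
    intro F hF
    have : volume (⋃ y ∈ F, y +ᵥ A) = ∑ y ∈ F, volume (y +ᵥ A) :=
      measure_biUnion_finset hF.2 (fun y _ => hA.const_vadd y)
    have hsum : ∑ y ∈ F, volume (y +ᵥ A) = (F.card : ℝ≥0∞) * volume A := by
      have : ∀ y ∈ F, volume (y +ᵥ A) = volume A := fun y _ => measure_vadd _ _ _
      rw [Finset.sum_congr rfl this, Finset.sum_const, nsmul_eq_mul]
    have hsubW : (⋃ y ∈ F, y +ᵥ A) ⊆ W := by
      apply Set.iUnion₂_subset
      intro y hy
      exact hUA y (hF.1 hy)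
    calc (F.card : ℝ≥0∞) * volume A = volume (⋃ y ∈ F, y +ᵥ A) := by
          rw [this, hsum]
      _ ≤ volume W := measure_mono hsubW
  have hboundN : ∀ F, P F → F.card ≤ ⌊(volume W / volume A).toReal⌋₊ := by
    intro F hF
    have h1 : (F.card : ℝ≥0∞) ≤ volume W / volume A :=
      (ENNReal.le_div_iff_mul_le (Or.inl hApos) (Or.inl hAfin)).mpr (hbound F hF)
    have h2 : volume W / volume A ≠ ⊤ := by
      exact (ENNReal.div_lt_top hWfin hApos).ne
    have h3 := ENNReal.toReal_mono h2 h1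
    simp only [ENNReal.toReal_natCast] at h3
    exact Nat.le_floor h3
  -- maximal cardinality packing
  have h0T : P ∅ := by
    constructor
    · simp
    · simp
  set T : Set ℕ := {k | ∃ F, P F ∧ F.card = k} with hT
  have hTne : T.Nonempty := ⟨0, ∅, h0T, by simp⟩
  have hTbdd : BddAbove T := by
    refine ⟨⌊(volume W / volume A).toReal⌋₊, ?_⟩
    rintro k ⟨F, hF, rfl⟩
    exact hboundN F hF
  obtain ⟨F, hPF, hFcard⟩ := Nat.sSup_mem hTne hTbdd
  refine ⟨F, hPF.1, hbound F hPF, ?_⟩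
  intro u hu
  by_contra hcon
  push_neg at hcon
  -- hcon : ∀ y ∈ F, Disjoint (u +ᵥ A) (y +ᵥ A)
  have hAne : A.Nonempty := nonempty_of_measure_ne_zero hApos
  have huF : u ∉ F := by
    intro huF
    have := hcon u huF
    rw [disjoint_self] at this
    have : (u +ᵥ A) = ∅ := this
    obtain ⟨a, ha⟩ := hAne
    exact absurd this (Set.Nonempty.ne_empty ⟨u + a, ⟨a, ha, rfl⟩⟩)
  have hPF' : P (insert u F) := by
    constructor
    · rw [Finset.coe_insert]
      exact Set.insert_subset hu hPF.1
    · rw [Finset.coe_insert]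
      apply hPF.2.insert
      intro y hy _
      exact hcon y hy
  have : (insert u F).card ∈ T := ⟨insert u F, hPF', rfl⟩
  have hle := le_csSup hTbdd this
  rw [Finset.card_insert_of_notMem huF, hFcard] at hle
  omega

/-- Existence of a good center: a symmetric convex compact `S ⊆ -c +ᵥ K` with
`volume K ≤ 2^(n+1) * volume S`. -/
private lemma exists_symm_core {K : Set (Fin n → ℝ)} (hKconv : Convex ℝ K)
    (hKcomp : IsCompact K) (hKpos : volume K ≠ 0) (hKfin : volume K ≠ ⊤) :
    ∃ (c : Fin n → ℝ) (S : Set (Fin n → ℝ)),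
      Convex ℝ S ∧ IsCompact S ∧ (∀ s ∈ S, -s ∈ S) ∧ (0 : Fin n → ℝ) ∈ S ∧
      S ⊆ (-c) +ᵥ K ∧
      volume K ≤ 2 * ENNReal.ofReal (2 ^ n) * volume S := by
  have hKmeas : MeasurableSet K := hKcomp.isClosed.measurableSet
  have hnegK : IsCompact ((-1 : ℝ) • K) := hKcomp.smul _
  have h2K : IsCompact ((2 : ℝ) • K) := hKcomp.smul _
  have hKK : (2 : ℝ) • K = K + K := by
    rw [show (2:ℝ) = 1 + 1 by norm_num, hKconv.add_smul zero_le_one zero_le_one, one_smul]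
  obtain ⟨x, hx⟩ := exists_avg hKmeas hnegK.isClosed.measurableSet
    h2K.isClosed.measurableSet
    (by
      intro p hp y hy
      obtain ⟨k, hk, rfl⟩ := hy
      rw [hKK]
      have he : p - (-1 : ℝ) • k = p + k := by
        rw [neg_one_smul]; abel
      rw [he]
      exact Set.add_mem_add hp hk)
    h2K.measure_lt_top.ne hKfin hnegK.measure_lt_top.ne
  have hvolneg : volume ((-1 : ℝ) • K) = volume K := by
    rw [Measure.addHaar_smul, Module.finrank_fin_fun]
    simp
  rw [hvolneg] at hx
  set G : Set (Fin n → ℝ) := K ∩ (x +ᵥ (-1 : ℝ) • K) with hG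
  set c : Fin n → ℝ := (2⁻¹ : ℝ) • x with hc
  have hx2c : x = c + c := by
    rw [hc]
    funext j
    simp only [Pi.add_apply, Pi.smul_apply, smul_eq_mul]
    ring
  have hGK : G ⊆ K := Set.inter_subset_left
  have hGpos : volume G ≠ 0 := by
    intro h0
    rw [h0, mul_zero] at hx
    exact hKpos (by simpa using mul_eq_zero.mp (le_antisymm hx (zero_le)))
  have hGne : G.Nonempty := nonempty_of_measure_ne_zero hGpos
  have hGmem : ∀ g, g ∈ G ↔ (g ∈ K ∧ x - g ∈ K) := by
    intro g
    rw [hG, Set.mem_inter_iff, mem_vadd_iff]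
    apply and_congr_right'
    constructor
    · rintro ⟨k, hk, hke⟩
      have hke' : (-1 : ℝ) • k = g - x := hke
      rw [neg_one_smul] at hke'
      have hgoal : x - g = k := by
        have h2 := congrArg Neg.neg hke'
        rw [neg_neg, neg_sub] at h2
        exact h2.symm
      rwa [hgoal]
    · intro hxg
      exact ⟨x - g, hxg, show (-1 : ℝ) • (x - g) = g - x by rw [neg_one_smul]; abel⟩
  have hcK : c ∈ K := by
    obtain ⟨g, hg⟩ := hGne
    obtain ⟨hg1, hg2⟩ := (hGmem g).mp hg
    have hmid := hKconv hg1 hg2 (by norm_num : (0:ℝ) ≤ 1/2)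
      (by norm_num : (0:ℝ) ≤ 1/2) (by norm_num)
    have he : (1/2 : ℝ) • g + (1/2 : ℝ) • (x - g) = c := by
      rw [hc]
      funext j
      simp only [Pi.add_apply, Pi.smul_apply, Pi.sub_apply, smul_eq_mul]
      ring
    rwa [he] at hmid
  set S : Set (Fin n → ℝ) := (-c) +ᵥ G with hS
  have hmemS : ∀ s, s ∈ S ↔ (c + s ∈ K ∧ c - s ∈ K) := by
    intro s
    rw [hS, mem_vadd_iff]
    have he : s - -c = c + s := by abel
    rw [he, hGmem]
    have he2 : x - (c + s) = c - s := by rw [hx2c]; abel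
    rw [he2]
  refine ⟨c, S, ?_, ?_, ?_, ?_, ?_, ?_⟩
  · exact (hKconv.inter ((hKconv.smul _).vadd _)).vadd _
  · exact (hKcomp.inter_right ((hnegK.vadd x).isClosed)).vadd _
  · intro s hs
    rw [hmemS] at hs ⊢
    constructor
    · have he : c + -s = c - s := by abel
      rw [he]; exact hs.2
    · have he : c - -s = c + s := by abel
      rw [he]; exact hs.1
  · rw [hmemS]
    constructor
    · simpa using hcK
    · simpa using hcK
  · rw [hS]
    exact Set.vadd_set_mono hGK
  · have h2Kvol : volume ((2:ℝ) • K) = ENNReal.ofReal (2 ^ n) * volume K :=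
      vol_smul 2 (by norm_num) K
    rw [h2Kvol] at hx
    have hx' : volume K * volume K ≤
        volume K * (2 * ENNReal.ofReal (2 ^ n) * volume G) := by
      calc volume K * volume K ≤
          2 * (ENNReal.ofReal (2 ^ n) * volume K) * volume G := hx
        _ = volume K * (2 * ENNReal.ofReal (2 ^ n) * volume G) := by ring
    have hK1 := (ENNReal.mul_le_mul_iff_right hKpos hKfin).mp hx'
    calc volume K ≤ 2 * ENNReal.ofReal (2 ^ n) * volume G := hK1
      _ = 2 * ENNReal.ofReal (2 ^ n) * volume S := by rw [hS, measure_vadd]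

set_option maxHeartbeats 1000000 in
private lemma core (hn2 : 2 ≤ n)
    (hgrow : 8 * (n : ℝ) * Real.log (16 * n) + 18 ≤ (5 / 4 : ℝ) ^ n)
    {K : Set (Fin n → ℝ)} (hKconv : Convex ℝ K) (hKcomp : IsCompact K)
    (hK0 : (0 : Fin n → ℝ) ∈ interior K)
    {ε : ℝ} (hε0 : 0 < ε) (hε1 : ε ≤ 1) :
    ∃ N : Finset (Fin n → ℝ), (N.card : ℝ) ≤ (5 / ε) ^ n ∧
      K ⊆ ⋃ y ∈ N, y +ᵥ ε • K := by
  classical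
  have hK0' : (0 : Fin n → ℝ) ∈ K := interior_subset hK0
  have hKpos : volume K ≠ 0 := (Measure.measure_pos_of_nonempty_interior _ ⟨0, hK0⟩).ne'
  have hKfin : volume K ≠ ⊤ := hKcomp.measure_lt_top.ne
  obtain ⟨c, S, hSconv, hScomp, hSsym, h0S, hSK, hMP⟩ :=
    exists_symm_core hKconv hKcomp hKpos hKfin
  have hn0 : 0 < n := lt_of_lt_of_le two_pos hn2
  have hnR : (2 : ℝ) ≤ (n : ℝ) := by exact_mod_cast hn2
  have hnpos : (0 : ℝ) < (n : ℝ) := by linarith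
  -- parameters
  set β : ℝ := ε / (2 * n) with hβ
  set lam : ℝ := 1 - 1 / (2 * n) with hlam
  have hβpos : 0 < β := by rw [hβ]; positivity
  have hinv : 1 / (2 * (n : ℝ)) ≤ 1 / 4 := by
    apply one_div_le_one_div_of_le <;> linarith
  have hlam_pos : 0 < lam := by
    rw [hlam]; linarith
  have hlam_le1 : lam ≤ 1 := by
    rw [hlam]
    have : 0 < 1 / (2 * (n : ℝ)) := by positivity
    linarith
  have hlamε_pos : 0 < lam * ε := mul_pos hlam_pos hε0
  have hlamε_le : lam * ε ≤ ε := by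
    nlinarith
  have hsum : β + lam * ε = ε := by
    rw [hβ, hlam]
    field_simp
    ring
  have h2β : 2 * β ≤ ε := by
    have he : 2 * β = ε / n := by
      rw [hβ]; field_simp
    rw [he]
    exact div_le_self hε0.le (by linarith)
  -- the bodies
  set A : Set (Fin n → ℝ) := β • S with hA
  set Bs : Set (Fin n → ℝ) := (lam * ε) • S with hBs
  set D : Set (Fin n → ℝ) := K + ε • S with hD
  set W₀ : Set (Fin n → ℝ) := K + A with hW₀
  have hAcomp : IsCompact A := hScomp.smul _
  have hBcomp : IsCompact Bs := hScomp.smul _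
  have hεScomp : IsCompact (ε • S) := hScomp.smul _
  have hDcomp : IsCompact D := hKcomp.add hεScomp
  have hW₀comp : IsCompact W₀ := hKcomp.add hAcomp
  have hAmeas : MeasurableSet A := hAcomp.isClosed.measurableSet
  have hBmeas : MeasurableSet Bs := hBcomp.isClosed.measurableSet
  have hDmeas : MeasurableSet D := hDcomp.isClosed.measurableSet
  have hW₀meas : MeasurableSet W₀ := hW₀comp.isClosed.measurableSet
  have hAsym : ∀ a ∈ A, -a ∈ A := by
    rintro _ ⟨s, hs, rfl⟩
    have he : -(β • s) = β • (-s) := (smul_neg β s).symm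
    rw [hA, he]
    exact Set.smul_mem_smul_set (hSsym s hs)
  have hABs : A + Bs = ε • S := by
    rw [hA, hBs, ← hSconv.add_smul hβpos.le hlamε_pos.le, hsum]
  have hAA : A + A = (2 * β) • S := by
    rw [hA, ← hSconv.add_smul hβpos.le hβpos.le]
    norm_num [two_mul]
  have h0A : (0 : Fin n → ℝ) ∈ A := ⟨0, h0S, smul_zero _⟩
  have h0εS : (0 : Fin n → ℝ) ∈ ε • S := ⟨0, h0S, smul_zero _⟩
  -- support condition
  have hsupp : ∀ p ∈ W₀, ∀ x ∈ Bs, p - x ∈ D := by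
    intro p hp x hx
    rw [hW₀, Set.mem_add] at hp
    obtain ⟨k, hk, a, ha, rfl⟩ := hp
    have hnegx : -x ∈ Bs := by
      obtain ⟨s, hs, rfl⟩ := hx
      have he : -((lam * ε) • s) = (lam * ε) • (-s) := (smul_neg _ s).symm
      rw [hBs, he]
      exact Set.smul_mem_smul_set (hSsym s hs)
    have : a + -x ∈ ε • S := by
      rw [← hABs]
      exact Set.add_mem_add ha hnegx
    rw [hD]
    have he : k + a - x = k + (a + -x) := by abel
    rw [he]
    exact Set.add_mem_add hk this
  -- sizes
  have hSfin : volume S ≠ ⊤ := by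
    have : volume S ≤ volume K := by
      calc volume S ≤ volume ((-c) +ᵥ K) := measure_mono hSK
        _ = volume K := measure_vadd _ _ _
    exact (lt_of_le_of_lt this (lt_top_iff_ne_top.mpr hKfin)).ne
  have hSpos : volume S ≠ 0 := by
    intro h0
    rw [h0, mul_zero] at hMP
    exact hKpos (le_antisymm hMP (zero_le))
  have hεSK : ε • S ⊆ (ε • (-c)) +ᵥ ε • K := by
    rintro _ ⟨s, hs, rfl⟩
    have hsc : s - -c ∈ K := (mem_vadd_iff).mp (hSK hs)
    rw [mem_vadd_iff]
    have he : ε • s - ε • (-c) = ε • (s - -c) := by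
      rw [← smul_sub]
    rw [he]
    exact Set.smul_mem_smul_set hsc
  have haddvadd : ∀ (X Y : Set (Fin n → ℝ)) (v : Fin n → ℝ),
      X + (v +ᵥ Y) = v +ᵥ (X + Y) := by
    intro X Y v
    ext p
    simp only [Set.mem_add, mem_vadd_iff]
    constructor
    · rintro ⟨x, hx, y, hy, rfl⟩
      exact ⟨x, hx, y - v, hy, by abel⟩
    · rintro ⟨x, hx, y, hy, he⟩
      refine ⟨x, hx, v + y, by simpa using hy, ?_⟩
      calc x + (v + y) = (x + y) + v := by abel
        _ = (p - v) + v := by rw [he]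
        _ = p := by abel
  have hDsub : D ⊆ (ε • (-c)) +ᵥ ((1 + ε) • K) := by
    rw [hD]
    calc K + ε • S ⊆ K + ((ε • (-c)) +ᵥ ε • K) := Set.add_subset_add_left hεSK
      _ = (ε • (-c)) +ᵥ (K + ε • K) := haddvadd _ _ _
      _ = (ε • (-c)) +ᵥ ((1 + ε) • K) := by
          rw [hKconv.add_smul zero_le_one hε0.le, one_smul]
  have hW₀sub : W₀ ⊆ (β • (-c)) +ᵥ ((1 + β) • K) := by
    rw [hW₀, hA]
    have hβSK : β • S ⊆ (β • (-c)) +ᵥ β • K := by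
      rintro _ ⟨s, hs, rfl⟩
      have hsc : s - -c ∈ K := (mem_vadd_iff).mp (hSK hs)
      rw [mem_vadd_iff]
      have he : β • s - β • (-c) = β • (s - -c) := by rw [← smul_sub]
      rw [he]
      exact Set.smul_mem_smul_set hsc
    calc K + β • S ⊆ K + ((β • (-c)) +ᵥ β • K) := Set.add_subset_add_left hβSK
      _ = (β • (-c)) +ᵥ (K + β • K) := haddvadd _ _ _
      _ = (β • (-c)) +ᵥ ((1 + β) • K) := by
          rw [hKconv.add_smul zero_le_one hβpos.le, one_smul]
  have hDvol : volume D ≤ ENNReal.ofReal ((1 + ε) ^ n) * volume K := by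
    calc volume D ≤ volume ((ε • (-c)) +ᵥ ((1 + ε) • K)) := measure_mono hDsub
      _ = volume ((1 + ε) • K) := measure_vadd _ _ _
      _ = ENNReal.ofReal ((1 + ε) ^ n) * volume K := vol_smul _ (by linarith) _
  have hW₀vol : volume W₀ ≤ ENNReal.ofReal ((1 + β) ^ n) * volume K := by
    calc volume W₀ ≤ volume ((β • (-c)) +ᵥ ((1 + β) • K)) := measure_mono hW₀sub
      _ = volume ((1 + β) • K) := measure_vadd _ _ _
      _ = ENNReal.ofReal ((1 + β) ^ n) * volume K := vol_smul _ (by linarith) _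
  have hDfin : volume D ≠ ⊤ := hDcomp.measure_lt_top.ne
  have hW₀fin : volume W₀ ≠ ⊤ := hW₀comp.measure_lt_top.ne
  have hBfin : volume Bs ≠ ⊤ := hBcomp.measure_lt_top.ne
  have hAfin : volume A ≠ ⊤ := hAcomp.measure_lt_top.ne
  have hvolA : volume A = ENNReal.ofReal (β ^ n) * volume S := vol_smul _ hβpos.le _
  have hvolB : volume Bs = ENNReal.ofReal ((lam * ε) ^ n) * volume S :=
    vol_smul _ hlamε_pos.le _
  have hApos : volume A ≠ 0 := by
    rw [hvolA]
    exact mul_ne_zero (ENNReal.ofReal_pos.mpr (by positivity)).ne' hSpos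
  have hεSsubD : ε • S ⊆ D := by
    intro x hx
    rw [hD]
    have : (0 : Fin n → ℝ) + x = x := by abel
    rw [← this]
    exact Set.add_mem_add hK0' hx
  have hBsubεS : Bs ⊆ ε • S :=
    smul_subset_of_le hSconv h0S hlamε_pos.le hlamε_le
  have hBD : volume Bs ≤ volume D := measure_mono (hBsubεS.trans hεSsubD)
  have hKsubD : K ⊆ D := by
    intro k hk
    rw [hD]
    have : k + (0 : Fin n → ℝ) = k := by abel
    rw [← this]
    exact Set.add_mem_add hk h0εS
  have hDpos : volume D ≠ 0 := by
    intro h0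
    exact hKpos (le_antisymm (h0 ▸ measure_mono hKsubD) (zero_le))
  -- stage 1
  set m : ℕ := ⌈(4 / ε) ^ n * (8 * ((n : ℝ) * Real.log (16 * n) + 2))⌉₊ with hm
  obtain ⟨F₁, hF₁card, hF₁left⟩ := stage1 hW₀meas hBmeas hDmeas hsupp
    hDfin hW₀fin hBfin hBD hDpos m
  set WW : Set (Fin n → ℝ) := W₀ \ ⋃ y ∈ F₁, y +ᵥ Bs with hWW
  set U : Set (Fin n → ℝ) := K \ ⋃ y ∈ F₁, y +ᵥ ε • S with hU
  have hWWfin : volume WW ≠ ⊤ :=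
    (lt_of_le_of_lt (measure_mono Set.diff_subset) (lt_top_iff_ne_top.mpr hW₀fin)).ne
  have hUA : ∀ u ∈ U, u +ᵥ A ⊆ WW := by
    intro u hu p hp
    rw [mem_vadd_iff] at hp
    obtain ⟨huK, huNot⟩ := hu
    constructor
    · rw [hW₀]
      have : u + (p - u) = p := by abel
      rw [← this]
      exact Set.add_mem_add huK hp
    · intro hpIn
      apply huNot
      simp only [Set.mem_iUnion] at hpIn ⊢
      obtain ⟨y, hy, hpy⟩ := hpIn
      refine ⟨y, hy, ?_⟩
      rw [mem_vadd_iff] at hpy ⊢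
      have hnegA : -(p - u) ∈ A := hAsym _ hp
      have he2 : u - y = -(p - u) + (p - y) := by abel
      rw [he2, ← hABs]
      exact Set.add_mem_add hnegA hpy
  obtain ⟨F₂, hF₂U, hF₂count, hF₂cov⟩ := packing hAmeas hUA hApos hAfin hWWfin
  -- coverage of K by translates of ε • S centered in F₁ ∪ F₂
  have hcov : K ⊆ ⋃ y ∈ F₁ ∪ F₂, y +ᵥ ε • S := by
    intro p hp
    by_cases hpU : p ∈ ⋃ y ∈ F₁, y +ᵥ ε • S
    · simp only [Set.mem_iUnion] at hpU ⊢
      obtain ⟨y, hy, hpy⟩ := hpU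
      exact ⟨y, Finset.mem_union_left _ hy, hpy⟩
    · have hpU' : p ∈ U := ⟨hp, hpU⟩
      obtain ⟨y, hy, hdisj⟩ := hF₂cov p hpU'
      rw [Set.not_disjoint_iff] at hdisj
      obtain ⟨x, hx1, hx2⟩ := hdisj
      rw [mem_vadd_iff] at hx1 hx2
      simp only [Set.mem_iUnion]
      refine ⟨y, Finset.mem_union_right _ hy, ?_⟩
      rw [mem_vadd_iff]
      have hnegA : -(x - p) ∈ A := hAsym _ hx1
      have he : p - y = (x - y) + -(x - p) := by abel
      rw [he]
      have h2A : (x - y) + -(x - p) ∈ A + A := Set.add_mem_add hx2 hnegA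
      rw [hAA] at h2A
      exact smul_subset_of_le hSconv h0S (by positivity) h2β h2A
  -- final finset
  set N : Finset (Fin n → ℝ) := (F₁ ∪ F₂).image (fun y => y + ε • (-c)) with hN
  have hNcov : K ⊆ ⋃ y ∈ N, y +ᵥ ε • K := by
    intro p hp
    obtain ⟨y, hy, hpy⟩ := by
      have := hcov hp
      simp only [Set.mem_iUnion] at this
      exact this
    simp only [Set.mem_iUnion]
    refine ⟨y + ε • (-c), by
      simp only [hN, Finset.mem_image]
      exact ⟨y, hy, rfl⟩, ?_⟩
    rw [mem_vadd_iff] at hpy ⊢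
    have := hεSK hpy
    rw [mem_vadd_iff] at this
    have he : p - (y + ε • (-c)) = p - y - ε • (-c) := by abel
    rwa [he]
  refine ⟨N, ?_, hNcov⟩
  -- cardinality estimate
  have hNcard : (N.card : ℝ) ≤ (m : ℝ) + (F₂.card : ℝ) := by
    have h1 : N.card ≤ (F₁ ∪ F₂).card := Finset.card_image_le
    have h2 : (F₁ ∪ F₂).card ≤ F₁.card + F₂.card := Finset.card_union_le _ _
    have h3 := h1.trans (h2.trans (Nat.add_le_add_right hF₁card _))
    exact_mod_cast h3
  set vS : ℝ := (volume S).toReal with hvS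
  set vK : ℝ := (volume K).toReal with hvK
  have hvSpos : 0 < vS := ENNReal.toReal_pos hSpos hSfin
  have hvKpos : 0 < vK := ENNReal.toReal_pos hKpos hKfin
  have hMPr : vK ≤ 2 * 2 ^ n * vS := by
    have h := ENNReal.toReal_mono
      (ENNReal.mul_ne_top (ENNReal.mul_ne_top (by simp) ENNReal.ofReal_ne_top) hSfin) hMP
    rw [ENNReal.toReal_mul, ENNReal.toReal_mul, ENNReal.toReal_ofReal
      (by positivity : (0:ℝ) ≤ (2:ℝ)^n)] at h
    simpa using h
  have hbR : (volume Bs).toReal = (lam * ε) ^ n * vS := by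
    rw [hvolB, ENNReal.toReal_mul, ENNReal.toReal_ofReal (by positivity)]
  have haR : (volume A).toReal = β ^ n * vS := by
    rw [hvolA, ENNReal.toReal_mul, ENNReal.toReal_ofReal (by positivity)]
  have hdR : (volume D).toReal ≤ (1 + ε) ^ n * vK := by
    have h := ENNReal.toReal_mono
      (ENNReal.mul_ne_top ENNReal.ofReal_ne_top hKfin) hDvol
    rwa [ENNReal.toReal_mul, ENNReal.toReal_ofReal (by positivity)] at h
  have hw₀R : (volume W₀).toReal ≤ (1 + β) ^ n * vK := by
    have h := ENNReal.toReal_mono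
      (ENNReal.mul_ne_top ENNReal.ofReal_ne_top hKfin) hW₀vol
    rwa [ENNReal.toReal_mul, ENNReal.toReal_ofReal (by positivity)] at h
  have hdRpos : 0 < (volume D).toReal := ENNReal.toReal_pos hDpos hDfin
  set L : ℝ := Real.log (16 * n) with hLdef
  have hL0 : 0 ≤ L := Real.log_nonneg (by linarith)
  -- the per-step density
  set q : ℝ := (volume Bs).toReal / (2 * (volume D).toReal) with hqdef
  have hlamn : (1/2 : ℝ) ≤ lam ^ n := by
    have h := one_add_mul_le_pow (a := -(1 / (2 * (n:ℝ)))) (by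
      have : 0 < 1 / (2 * (n:ℝ)) := by positivity
      linarith) n
    have he : 1 + (n:ℝ) * -(1 / (2 * n)) = 1/2 := by
      field_simp
      ring
    have he2 : (1 : ℝ) + -(1 / (2 * n)) = lam := by rw [hlam]; ring
    rw [he, he2] at h
    exact h
  have hp4 : ((2:ℝ))^n * (2:ℝ)^n = 4^n := by
    rw [← mul_pow]; norm_num
  have hq₀le : ε ^ n / (8 * 4 ^ n) ≤ q := by
    rw [hqdef, div_le_div_iff₀ (by positivity) (by positivity)]
    have hble : (1/2) * ε^n * vS ≤ (volume Bs).toReal := by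
      rw [hbR, mul_pow]
      have h1 : (1/2) * ε^n ≤ lam ^ n * ε ^ n :=
        mul_le_mul_of_nonneg_right hlamn (by positivity)
      exact mul_le_mul_of_nonneg_right h1 hvSpos.le
    have hdle : (volume D).toReal ≤ 2^n * (2 * 2^n * vS) := by
      calc (volume D).toReal ≤ (1 + ε)^n * vK := hdR
        _ ≤ 2^n * vK := by
            apply mul_le_mul_of_nonneg_right _ hvKpos.le
            exact pow_le_pow_left₀ (by linarith) (by linarith) n
        _ ≤ 2^n * (2 * 2^n * vS) := by
            apply mul_le_mul_of_nonneg_left hMPr (by positivity)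
    calc ε ^ n * (2 * (volume D).toReal)
        ≤ ε ^ n * (2 * (2^n * (2 * 2^n * vS))) := by
          apply mul_le_mul_of_nonneg_left _ (by positivity)
          linarith
      _ = (8 * 4^n) * ((1/2) * ε^n * vS) := by
          rw [← hp4]; ring
      _ ≤ (8 * 4^n) * (volume Bs).toReal := by
          apply mul_le_mul_of_nonneg_left hble (by positivity)
      _ = (volume Bs).toReal * (8 * 4 ^ n) := by ring
  have hqle1 : q ≤ 1 := by
    rw [hqdef, div_le_one (by positivity)]
    have := ENNReal.toReal_mono hDfin hBD
    linarith
  have hq0 : 0 ≤ q := by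
    rw [hqdef]; positivity
  -- exponential bound on the leftover
  have hmlow : (4 / ε) ^ n * (8 * ((n:ℝ) * L + 2)) ≤ (m : ℝ) := by
    rw [hm]
    exact Nat.le_ceil _
  have hqm : (n:ℝ) * L + 2 ≤ q * m := by
    have hq₀m : (ε ^ n / (8 * 4 ^ n)) * ((4 / ε) ^ n * (8 * ((n:ℝ) * L + 2)))
        = (n:ℝ) * L + 2 := by
      rw [div_pow]
      field_simp
    calc (n:ℝ) * L + 2
        = (ε ^ n / (8 * 4 ^ n)) * ((4 / ε) ^ n * (8 * ((n:ℝ) * L + 2))) := hq₀m.symm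
      _ ≤ q * ((4 / ε) ^ n * (8 * ((n:ℝ) * L + 2))) := by
          apply mul_le_mul_of_nonneg_right hq₀le (by positivity)
      _ ≤ q * m := by
          apply mul_le_mul_of_nonneg_left hmlow hq0
  have hpow_exp : (1 - q) ^ m ≤ Real.exp (-((n:ℝ) * L + 2)) := by
    calc (1 - q) ^ m ≤ Real.exp (-q) ^ m := by
          apply pow_le_pow_left₀ (by linarith)
          have := Real.add_one_le_exp (-q)
          linarith
      _ = Real.exp (-(q * m)) := by
          rw [← Real.exp_nat_mul]
          congr 1
          ring
      _ ≤ Real.exp (-((n:ℝ) * L + 2)) := by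
          apply Real.exp_le_exp.mpr
          linarith
  have hexp_eq : Real.exp (-((n:ℝ) * L + 2)) = Real.exp (-2) * (1 / (16 * n)) ^ n := by
    rw [show -((n:ℝ) * L + 2) = -2 + (n:ℝ) * (-L) by ring, Real.exp_add,
      Real.exp_nat_mul]
    congr 2
    rw [hLdef, ← Real.log_inv, Real.exp_log (by positivity), one_div]
  -- counting the second stage
  have hcard2 : (F₂.card : ℝ) ≤ (1 / ε) ^ n := by
    have hcount : (F₂.card : ℝ) * (volume A).toReal ≤ (volume WW).toReal := by
      have h := ENNReal.toReal_mono hWWfin hF₂count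
      rwa [ENNReal.toReal_mul, ENNReal.toReal_natCast] at h
    have hww : (volume WW).toReal ≤ 4 * 2^n * vS * ((1 - q) ^ m) := by
      have h2 : (1 + β) ^ n ≤ 2 := by
        calc (1 + β)^n ≤ Real.exp β ^ n := by
              apply pow_le_pow_left₀ (by linarith)
              have := Real.add_one_le_exp β
              linarith
          _ = Real.exp ((n:ℝ) * β) := by rw [← Real.exp_nat_mul]
          _ ≤ Real.exp (1/2 : ℝ) := by
              apply Real.exp_le_exp.mpr
              rw [hβ]
              rw [show (n:ℝ) * (ε / (2 * n)) = ε / 2 by field_simp]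
              linarith
          _ ≤ 2 := by
              by_contra hcon
              push_neg at hcon
              have h4 : (2:ℝ) * 2 < Real.exp (1/2:ℝ) * Real.exp (1/2:ℝ) :=
                mul_lt_mul'' hcon hcon (by norm_num) (by norm_num)
              have h5 : Real.exp (1/2:ℝ) * Real.exp (1/2:ℝ) = Real.exp 1 := by
                rw [← Real.exp_add]; norm_num
              rw [h5] at h4
              have h6 := Real.exp_one_lt_d9
              norm_num at h4 h6
              linarith
      have hw₀2 : (volume W₀).toReal ≤ 4 * 2^n * vS := by
        calc (volume W₀).toReal ≤ (1 + β)^n * vK := hw₀R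
          _ ≤ 2 * vK := by
              apply mul_le_mul_of_nonneg_right h2 hvKpos.le
          _ ≤ 2 * (2 * 2^n * vS) := by
              apply mul_le_mul_of_nonneg_left hMPr (by norm_num)
          _ = 4 * 2^n * vS := by ring
      calc (volume WW).toReal ≤ (volume W₀).toReal * (1 - q)^m := hF₁left
        _ ≤ (4 * 2^n * vS) * (1 - q)^m := by
            apply mul_le_mul_of_nonneg_right hw₀2 (pow_nonneg (by linarith) m)
    have haRpos : 0 < (volume A).toReal := by rw [haR]; positivity
    have e1 : (2:ℝ)^n * (1/(16*n))^n = (1/(8*(n:ℝ)))^n := by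
      rw [← mul_pow]
      congr 1
      field_simp
      ring
    have e2 : (4:ℝ)^n * (1/(8*(n:ℝ)))^n = (1/(2*(n:ℝ)))^n := by
      rw [← mul_pow]
      congr 1
      field_simp
      ring
    have e3 : 4 * Real.exp (-2) ≤ (4:ℝ)^n := by
      have hx : Real.exp (-2) ≤ 1 := by
        have := Real.exp_le_exp.mpr (show (-2:ℝ) ≤ 0 by norm_num)
        rwa [Real.exp_zero] at this
      have h4 : (4:ℝ) ≤ 4^n := le_self_pow₀ (by norm_num) hn0.ne'
      have h5 : 4 * Real.exp (-2) ≤ 4 * 1 :=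
        mul_le_mul_of_nonneg_left hx (by norm_num)
      linarith
    have hfin : (F₂.card : ℝ) * (volume A).toReal ≤ (1/ε)^n * (volume A).toReal := by
      calc (F₂.card : ℝ) * (volume A).toReal
          ≤ 4 * 2^n * vS * ((1 - q)^m) := hcount.trans hww
        _ ≤ 4 * 2^n * vS * (Real.exp (-2) * (1/(16*(n:ℝ)))^n) := by
            apply mul_le_mul_of_nonneg_left (hpow_exp.trans_eq hexp_eq) (by positivity)
        _ = (4 * Real.exp (-2)) * ((2:ℝ)^n * (1/(16*(n:ℝ)))^n) * vS := by ring
        _ = (4 * Real.exp (-2)) * (1/(8*(n:ℝ)))^n * vS := by rw [e1]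
        _ ≤ (4:ℝ)^n * (1/(8*(n:ℝ)))^n * vS := by
            apply mul_le_mul_of_nonneg_right _ hvSpos.le
            apply mul_le_mul_of_nonneg_right e3 (by positivity)
        _ = (1/(2*(n:ℝ)))^n * vS := by rw [e2]
        _ = (1/ε)^n * (volume A).toReal := by
            rw [haR, hβ]
            have he : (1/ε) * (ε/(2*(n:ℝ))) = 1/(2*(n:ℝ)) := by field_simp
            rw [← he, mul_pow]
            ring
    exact le_of_mul_le_mul_right hfin haRpos
  -- total count
  have hmub : (m : ℝ) ≤ (4/ε)^n * (8 * ((n:ℝ) * L + 2)) + 1 := by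
    rw [hm]
    exact (Nat.ceil_lt_add_one (by positivity)).le
  have h4εpos : (0:ℝ) ≤ (4/ε)^n := by positivity
  have h1le : (1:ℝ) ≤ (4/ε)^n := by
    apply one_le_pow₀
    rw [le_div_iff₀ hε0]
    linarith
  have hεle : (1/ε)^n ≤ (4/ε)^n := by
    have h14 : (1:ℝ)/ε ≤ 4/ε := (div_le_div_iff_of_pos_right hε0).mpr (by norm_num)
    exact pow_le_pow_left₀ (by positivity) h14 n
  calc (N.card : ℝ) ≤ (m : ℝ) + (F₂.card : ℝ) := hNcard
    _ ≤ ((4/ε)^n * (8 * ((n:ℝ) * L + 2)) + 1) + (1/ε)^n := by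
        have := hcard2
        linarith
    _ ≤ (4/ε)^n * (8 * ((n:ℝ) * L + 2)) + (4/ε)^n + (4/ε)^n := by
        linarith
    _ = (4/ε)^n * (8 * (n:ℝ) * L + 18) := by ring
    _ ≤ (4/ε)^n * ((5/4:ℝ)^n) := by
        apply mul_le_mul_of_nonneg_left _ h4εpos
        rw [hLdef]
        exact hgrow
    _ = (5/ε)^n := by
        rw [← mul_pow]
        congr 1
        field_simp

end Stmt8Aux

theorem stmt8 :
    ∃ n₀ : ℕ, ∀ n : ℕ, n₀ ≤ n →
    ∀ K : Set (Fin n → ℝ), Convex ℝ K → IsCompact K → (0 : Fin n → ℝ) ∈ interior K →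
    ∀ ε : ℝ, ε ∈ Set.Ioc (0:ℝ) 1 →
    ∃ N : Finset (Fin n → ℝ),
      (N.card : ℝ) ≤ (5 / ε) ^ n ∧ K ⊆ ⋃ y ∈ N, y +ᵥ ε • K := by
  have hev : ∀ᶠ k : ℕ in Filter.atTop,
      8 * (k : ℝ) * Real.log (16 * k) + 18 ≤ (5 / 4 : ℝ) ^ k := by
    have h2 : Filter.Tendsto (fun k : ℕ => ((k : ℝ)) ^ 2 * (4 / 5 : ℝ) ^ k)
        Filter.atTop (nhds 0) := by
      apply Summable.tendsto_atTop_zero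
      apply summable_pow_mul_geometric_of_norm_lt_one
      rw [Real.norm_eq_abs, abs_of_nonneg (by norm_num : (0:ℝ) ≤ 4/5)]
      norm_num
    have h2' : ∀ᶠ k : ℕ in Filter.atTop, ((k : ℝ)) ^ 2 * (4 / 5 : ℝ) ^ k < 1 / 256 :=
      h2.eventually (gt_mem_nhds (by norm_num))
    have h3 : ∀ᶠ k : ℕ in Filter.atTop, (36 : ℝ) ≤ (5 / 4 : ℝ) ^ k :=
      (tendsto_pow_atTop_atTop_of_one_lt (by norm_num : (1:ℝ) < 5 / 4)).eventually_ge_atTop 36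
    have h4 : ∀ᶠ k : ℕ in Filter.atTop, 2 ≤ k := Filter.eventually_ge_atTop 2
    filter_upwards [h2', h3, h4] with k hk1 hk2 hk3
    have hkR : (2 : ℝ) ≤ (k : ℝ) := by exact_mod_cast hk3
    have hlog : Real.log (16 * k) ≤ 16 * k := by
      have := Real.log_le_sub_one_of_pos (show (0:ℝ) < 16 * k by positivity)
      linarith
    have hp : (0 : ℝ) < (5 / 4 : ℝ) ^ k := by positivity
    have hmul : ((4 : ℝ) / 5) ^ k * ((5 : ℝ) / 4) ^ k = 1 := by
      rw [← mul_pow]; norm_num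
    have h5 : ((k : ℝ)) ^ 2 * (4 / 5 : ℝ) ^ k * (5 / 4 : ℝ) ^ k
        ≤ (1 / 256) * (5 / 4 : ℝ) ^ k :=
      mul_le_mul_of_nonneg_right hk1.le hp.le
    have h6 : ((k : ℝ)) ^ 2 * (4 / 5 : ℝ) ^ k * (5 / 4 : ℝ) ^ k = ((k : ℝ)) ^ 2 := by
      rw [mul_assoc, hmul, mul_one]
    have hsq : ((k : ℝ)) ^ 2 ≤ (1 / 256) * (5 / 4 : ℝ) ^ k := by
      rw [← h6]; exact h5
    have hmono : 8 * (k : ℝ) * Real.log (16 * k) ≤ 8 * (k : ℝ) * (16 * k) :=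
      mul_le_mul_of_nonneg_left hlog (by positivity)
    have hring : 8 * (k : ℝ) * (16 * k) = 128 * ((k:ℝ)) ^ 2 := by ring
    linarith [hsq, hk2, hmono, hring]
  obtain ⟨n₁, hn₁⟩ := Filter.eventually_atTop.mp hev
  refine ⟨max n₁ 2, ?_⟩
  intro n hn K hKconv hKcomp hK0 ε hε
  exact Stmt8Aux.core (le_trans (le_max_right _ _) hn)
    (hn₁ n (le_trans (le_max_left _ _) hn)) hKconv hKcomp hK0 hε.1 hε.2
end

section
/- Let K be a convex body in R^n with Vol_n(K) = 1, λ ∈ (0,1), ε ∈ (0, λ), and let X_1,...,X_m be independent, each uniform on K - λK. Then the probability that {X_i + λK}_{i=1}^m covers K is at least 1 - |N|·(1 - (λ-ε)^n/Vol_n(K-λK))^m, where N is any ε-net on K contained in K - εK. -/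
open MeasureTheory Set Pointwise ProbabilityTheory ENNReal

theorem stmt17 (n m : ℕ) (K : Set (Fin n → ℝ))
    (hKconv : Convex ℝ K) (hKcomp : IsCompact K) (hKint : (0 : Fin n → ℝ) ∈ interior K)
    (hKvol : volume K = 1)
    (lam ε : ℝ) (hlam : lam ∈ Set.Ioo (0:ℝ) 1) (hε : ε ∈ Set.Ioo (0:ℝ) lam)
    (N : Finset (Fin n → ℝ)) (hnet : K ⊆ ⋃ y ∈ N, y +ᵥ ε • K)
    (hNsub : (N : Set (Fin n → ℝ)) ⊆ K - ε • K)
    (Ω : Type*) [MeasurableSpace Ω] (P : Measure Ω) [IsProbabilityMeasure P]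
    (X : Fin m → Ω → (Fin n → ℝ)) (hXm : ∀ i, Measurable (X i))
    (hXunif : ∀ i, Measure.map (X i) P
      = (volume (K - lam • K))⁻¹ • volume.restrict (K - lam • K))
    (hindep : iIndepFun X P) :
    1 - (N.card : ℝ≥0∞) *
        (1 - ENNReal.ofReal ((lam - ε) ^ n) / volume (K - lam • K)) ^ m
      ≤ P {ω | K ⊆ ⋃ i, X i ω +ᵥ lam • K} := by
  have hlε : (0:ℝ) < lam - ε := sub_pos.mpr hε.2
  set T := K - lam • K with hTdef
  set r : ℝ≥0∞ := ENNReal.ofReal ((lam - ε) ^ n) with hrdef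
  set V : ℝ≥0∞ := volume T with hVdef
  set S : (Fin n → ℝ) → Set (Fin n → ℝ) := fun y => y +ᵥ (-(lam - ε)) • K with hSdef
  -- S y is compact, hence measurable
  have hScomp : ∀ y, IsCompact (S y) := fun y =>
    (hKcomp.image (continuous_const_smul _)).vadd y
  have hSm : ∀ y, MeasurableSet (S y) := fun y => (hScomp y).isClosed.measurableSet
  -- convexity splittings of lam • K
  have hsplit : lam • K = ε • K + (lam - ε) • K := by
    have := hKconv.add_smul (le_of_lt hε.1) (le_of_lt hlε)
    rwa [add_sub_cancel] at this
  have hsplit2 : lam • K = (lam - ε) • K + ε • K := by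
    have := hKconv.add_smul (le_of_lt hlε) (le_of_lt hε.1)
    rwa [sub_add_cancel] at this
  -- S y ⊆ T for y ∈ N
  have hSsub : ∀ y ∈ N, S y ⊆ T := by
    intro y hy x hx
    obtain ⟨a, ha, c, hc, hac⟩ := hNsub hy
    rw [Set.mem_vadd_set] at hx
    obtain ⟨u, hu, hux⟩ := hx
    rw [Set.mem_smul_set] at hu
    obtain ⟨z, hz, rfl⟩ := hu
    have key : y +ᵥ (-(lam - ε)) • z = a - (c + (lam - ε) • z) := by
      rw [← hac]
      simp only [vadd_eq_add, neg_smul]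
      abel
    rw [← hux, key]
    exact Set.sub_mem_sub ha (by
      rw [hsplit]
      exact Set.add_mem_add hc (Set.smul_mem_smul_set hz))
  -- volume of S y is r
  have hvolS : ∀ y, volume (S y) = r := by
    intro y
    have h0 : volume (S y) = volume ((-(lam - ε)) • K) := by
      simp [hSdef]
    rw [h0, Measure.addHaar_smul, hKvol, mul_one, hrdef]
    congr 1
    rw [Module.finrank_fintype_fun_eq_card, Fintype.card_fin,
      abs_pow, abs_neg, abs_of_pos hlε]
  -- the bad events
  set E : (Fin n → ℝ) → Fin m → Set Ω := fun y i => X i ⁻¹' (S y)ᶜ with hEdef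
  have hEm : ∀ y i, MeasurableSet (E y i) := fun y i => (hXm i) (hSm y).compl
  set bad : Set Ω := ⋃ y ∈ N, ⋂ i, E y i with hbaddef
  have hbadm : MeasurableSet bad :=
    N.measurableSet_biUnion (fun y _ => MeasurableSet.iInter fun i => hEm y i)
  -- probability of a single event
  have hsingle : ∀ i, ∀ y ∈ N, P (X i ⁻¹' S y) = r / V := by
    intro i y hy
    have h1 : P (X i ⁻¹' S y) = Measure.map (X i) P (S y) :=
      (Measure.map_apply (hXm i) (hSm y)).symm
    rw [h1, hXunif i, Measure.smul_apply, Measure.restrict_apply (hSm y),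
      Set.inter_eq_self_of_subset_left (hSsub y hy), hvolS y, smul_eq_mul,
      ENNReal.div_eq_inv_mul]
  have hsinglec : ∀ i, ∀ y ∈ N, P (E y i) = 1 - r / V := by
    intro i y hy
    have h2 : E y i = (X i ⁻¹' S y)ᶜ := rfl
    rw [h2, prob_compl_eq_one_sub ((hXm i) (hSm y)), hsingle i y hy]
  -- independence : probability of the intersection
  have hprod : ∀ y ∈ N, P (⋂ i, E y i) = (1 - r / V) ^ m := by
    intro y hy
    have h3 := hindep.meas_iInter (s := E y)
      (fun i => ⟨(S y)ᶜ, (hSm y).compl, rfl⟩)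
    rw [h3, Finset.prod_congr rfl (fun i _ => hsinglec i y hy)]
    simp
  -- union bound
  have hbad : P bad ≤ (N.card : ℝ≥0∞) * (1 - r / V) ^ m := by
    calc P bad ≤ ∑ y ∈ N, P (⋂ i, E y i) := measure_biUnion_finset_le N _
      _ = ∑ _y ∈ N, (1 - r / V) ^ m := Finset.sum_congr rfl (fun y hy => hprod y hy)
      _ = (N.card : ℝ≥0∞) * (1 - r / V) ^ m := by
          rw [Finset.sum_const, nsmul_eq_mul]
  -- deterministic inclusion
  have hincl : badᶜ ⊆ {ω | K ⊆ ⋃ i, X i ω +ᵥ lam • K} := by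
    intro ω hω x hx
    have hω' : ∀ y ∈ N, ∃ i, X i ω ∈ S y := by
      intro y hy
      by_contra h
      push_neg at h
      exact hω (Set.mem_biUnion hy (Set.mem_iInter.mpr fun i => h i))
    obtain ⟨y, hyN, hxy⟩ := Set.mem_iUnion₂.mp (hnet hx)
    obtain ⟨i, hXi⟩ := hω' y hyN
    rw [Set.mem_vadd_set] at hXi hxy
    obtain ⟨u, hu, hXeq⟩ := hXi
    rw [Set.mem_smul_set] at hu
    obtain ⟨z, hz, rfl⟩ := hu
    obtain ⟨v, hv, hxeq⟩ := hxy
    rw [Set.mem_smul_set] at hv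
    obtain ⟨w, hw, rfl⟩ := hv
    have hmem : (lam - ε) • z + ε • w ∈ lam • K := by
      rw [hsplit2]
      exact Set.add_mem_add (Set.smul_mem_smul_set hz) (Set.smul_mem_smul_set hw)
    refine Set.mem_iUnion.mpr ⟨i, ?_⟩
    rw [Set.mem_vadd_set]
    refine ⟨(lam - ε) • z + ε • w, hmem, ?_⟩
    rw [← hXeq, ← hxeq]
    simp only [vadd_eq_add, neg_smul]
    abel
  -- conclude
  calc 1 - (N.card : ℝ≥0∞) * (1 - r / V) ^ m
      ≤ 1 - P bad := tsub_le_tsub_left hbad 1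
    _ = P badᶜ := (prob_compl_eq_one_sub hbadm).symm
    _ ≤ P {ω | K ⊆ ⋃ i, X i ω +ᵥ lam • K} := measure_mono hincl
end
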